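/- arXiv:1511.01856 — 6 statements merged into one kernel-verified Lean document; each statement's English description precedes it below -/
import Mathlib

section
/- For all z ≥ 0, the integral ∫₀^∞ (1+|z-z'|)^{-2/3} (1+z')^{-2/3} dz' is bounded by C (1+z)^{-1/3} for a universal constant C. -/
open MeasureTheory Real
open Set

lemma aux_ioc (a b : ℝ) (hab : a ≤ b) :
    ∫ x in Set.Ioc a b, (1+x) ^ (-(2:ℝ)/3) = 3*((1+b)^((1:ℝ)/3) - (1+a)^((1:ℝ)/3)) := by
  rw [← intervalIntegral.integral_of_le hab]
  have : (∫ x in a..b, (1+x) ^ (-(2:ℝ)/3)) = ∫ x in (1+a)..(1+b), x ^ (-(2:ℝ)/3) :=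
    intervalIntegral.integral_comp_add_left (fun x => x ^ (-(2:ℝ)/3)) 1
  rw [this, integral_rpow (Or.inl (by norm_num))]
  norm_num
  ring

lemma aux_ioc0 (b : ℝ) (hb : 0 ≤ b) :
    ∫ x in Set.Ioc 0 b, (1+x) ^ (-(2:ℝ)/3) ≤ 3*(1+b)^((1:ℝ)/3) := by
  rw [aux_ioc 0 b hb]
  have h1 : ((1:ℝ)+0)^((1:ℝ)/3) = 1 := by norm_num
  rw [h1]
  have := Real.rpow_nonneg (show (0:ℝ) ≤ 1 + b by linarith) ((1:ℝ)/3)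
  nlinarith

lemma aux_ioi (c : ℝ) (hc : 0 ≤ c) :
    ∫ x in Set.Ioi c, (1+x) ^ (-(4:ℝ)/3) = 3*(1+c)^(-(1:ℝ)/3) := by
  have hmp : MeasurePreserving (fun x : ℝ => 1 + x) volume volume :=
    measurePreserving_add_left volume 1
  have hemb : MeasurableEmbedding (fun x : ℝ => 1 + x) :=
    (Homeomorph.addLeft (1:ℝ)).measurableEmbedding
  have hpre : (fun x : ℝ => 1 + x) ⁻¹' (Set.Ioi (1+c)) = Set.Ioi c := by
    ext x; simp
  have := hmp.setIntegral_preimage_emb hemb (fun x => x ^ (-(4:ℝ)/3)) (Set.Ioi (1+c))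
  rw [hpre] at this
  rw [this, integral_Ioi_rpow_of_lt (by norm_num) (by linarith)]
  norm_num
  ring

lemma aux_div23 (a c : ℝ) (ha : 0 < a) (hc : 0 < c) :
    (a/c)^(-(2:ℝ)/3) = c^((2:ℝ)/3) * a^(-(2:ℝ)/3) := by
  rw [show (-(2:ℝ)/3) = -((2:ℝ)/3) by norm_num, Real.div_rpow ha.le hc.le,
    Real.rpow_neg hc.le]
  field_simp

lemma aux_div13 (a c : ℝ) (ha : 0 < a) (hc : 0 < c) :
    (a/c)^(-(1:ℝ)/3) = c^((1:ℝ)/3) * a^(-(1:ℝ)/3) := by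
  rw [show (-(1:ℝ)/3) = -((1:ℝ)/3) by norm_num, Real.div_rpow ha.le hc.le,
    Real.rpow_neg hc.le]
  field_simp

lemma half_bound (z : ℝ) (hz : 0 ≤ z) :
    (1+z/2)^(-(1:ℝ)/3) ≤ 2*(1+z)^(-(1:ℝ)/3) := by
  have h1 : (1+z/2)^(-(1:ℝ)/3) ≤ ((1+z)/2)^(-(1:ℝ)/3) :=
    Real.rpow_le_rpow_of_nonpos (by linarith) (by linarith) (by norm_num)
  have h2 : ((1+z)/2)^(-(1:ℝ)/3) = (2:ℝ)^((1:ℝ)/3) * (1+z)^(-(1:ℝ)/3) :=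
    aux_div13 (1+z) 2 (by linarith) two_pos
  have h3 : (2:ℝ)^((1:ℝ)/3) ≤ 2 := by
    calc (2:ℝ)^((1:ℝ)/3) ≤ (2:ℝ)^(1:ℝ) :=
          Real.rpow_le_rpow_of_exponent_le one_le_two (by norm_num)
      _ = 2 := Real.rpow_one 2
  calc (1+z/2)^(-(1:ℝ)/3) ≤ (2:ℝ)^((1:ℝ)/3) * (1+z)^(-(1:ℝ)/3) := by rw [← h2]; exact h1
    _ ≤ 2*(1+z)^(-(1:ℝ)/3) :=
        mul_le_mul_of_nonneg_right h3 (Real.rpow_nonneg (by linarith) _)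

lemma aux_meas (z : ℝ) : Measurable (fun z' : ℝ => (1+|z-z'|)^(-(2:ℝ)/3) * (1+z')^(-(2:ℝ)/3)) := by
  fun_prop

lemma aux_ptwise (z x : ℝ) (hz : 0 ≤ z) (hx : 0 ≤ x) :
    (1+|z-x|)^(-(2:ℝ)/3) * (1+x)^(-(2:ℝ)/3) ≤ (1+z)^((2:ℝ)/3) * (1+x)^(-(4:ℝ)/3) := by
  have hA : (0:ℝ) < 1 + |z-x| := by positivity
  have hB : (0:ℝ) < 1 + x := by linarith
  have hz1 : (0:ℝ) < 1 + z := by linarith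
  have key : (1+x)/(1+z) ≤ 1 + |z-x| := by
    rw [div_le_iff₀ hz1]
    nlinarith [abs_nonneg (z-x), le_abs_self (x - z), neg_abs_le (z-x), abs_sub_comm z x]
  have h1 : (1+|z-x|)^(-(2:ℝ)/3) ≤ ((1+x)/(1+z))^(-(2:ℝ)/3) :=
    Real.rpow_le_rpow_of_nonpos (by positivity) key (by norm_num)
  have h2 : ((1+x)/(1+z))^(-(2:ℝ)/3) = (1+z)^((2:ℝ)/3) * (1+x)^(-(2:ℝ)/3) :=
    aux_div23 (1+x) (1+z) hB hz1
  calc (1+|z-x|)^(-(2:ℝ)/3) * (1+x)^(-(2:ℝ)/3)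
      ≤ ((1+x)/(1+z))^(-(2:ℝ)/3) * (1+x)^(-(2:ℝ)/3) := by
        apply mul_le_mul_of_nonneg_right h1 (Real.rpow_nonneg hB.le _)
    _ = (1+z)^((2:ℝ)/3) * ((1+x)^(-(2:ℝ)/3) * (1+x)^(-(2:ℝ)/3)) := by rw [h2]; ring
    _ = (1+z)^((2:ℝ)/3) * (1+x)^(-(4:ℝ)/3) := by
        rw [← Real.rpow_add hB]; norm_num

lemma aux_integrable (z : ℝ) (hz : 0 ≤ z) :
    IntegrableOn (fun z' : ℝ => (1+|z-z'|)^(-(2:ℝ)/3) * (1+z')^(-(2:ℝ)/3)) (Set.Ioi 0) := by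
  have hg : Integrable (fun x : ℝ => (1+z)^((2:ℝ)/3) * (1 + ‖x‖)^(-(4:ℝ)/3)) := by
    have := integrable_one_add_norm (E := ℝ) (μ := volume) (r := (4:ℝ)/3) (by simp; norm_num)
    rw [show (-(4:ℝ)/3) = -((4:ℝ)/3) by norm_num]
    exact this.const_mul _
  apply (hg.integrableOn).mono' ((aux_meas z).aestronglyMeasurable.restrict)
  filter_upwards [ae_restrict_mem measurableSet_Ioi] with x hx
  have hx0 : (0:ℝ) < x := hx
  rw [Real.norm_of_nonneg (mul_nonneg (Real.rpow_nonneg (by positivity) _)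
    (Real.rpow_nonneg (by linarith) _))]
  rw [Real.norm_of_nonneg (le_of_lt hx)]
  exact aux_ptwise z x hz (le_of_lt hx)

lemma cont_int {a b : ℝ} {g : ℝ → ℝ} (hg : ContinuousOn g (Set.Icc a b)) :
    IntegrableOn g (Set.Ioc a b) :=
  (hg.integrableOn_Icc).mono_set Set.Ioc_subset_Icc_self

set_option maxHeartbeats 1000000 in
theorem integral_bound_0 :
    ∃ C : ℝ, 0 < C ∧ ∀ z : ℝ, 0 ≤ z →
      (∫ z' in Set.Ioi (0:ℝ), (1 + |z - z'|) ^ (-(2:ℝ)/3) * (1 + z') ^ (-(2:ℝ)/3))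
        ≤ C * (1 + z) ^ (-(1:ℝ)/3) := by
  refine ⟨24, by norm_num, fun z hz => ?_⟩
  set f : ℝ → ℝ := fun z' => (1 + |z - z'|) ^ (-(2:ℝ)/3) * (1 + z') ^ (-(2:ℝ)/3) with hf
  have hint := aux_integrable z hz
  have hz1 : (0:ℝ) < 1 + z := by linarith
  have hz2 : (0:ℝ) < 1 + z/2 := by linarith
  have hpow13 : (0:ℝ) ≤ (1+z)^(-(1:ℝ)/3) := Real.rpow_nonneg hz1.le _
  -- splitting
  have hs1 : Set.Ioc (0:ℝ) (2*z) ⊆ Set.Ioi 0 := Set.Ioc_subset_Ioi_self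
  have hs2 : Set.Ioi (2*z) ⊆ Set.Ioi (0:ℝ) := Set.Ioi_subset_Ioi (by linarith)
  have hs3 : Set.Ioc (0:ℝ) z ⊆ Set.Ioi 0 := Set.Ioc_subset_Ioi_self
  have hs4 : Set.Ioc z (2*z) ⊆ Set.Ioi (0:ℝ) :=
    subset_trans Set.Ioc_subset_Ioi_self (Set.Ioi_subset_Ioi hz)
  have hs5 : Set.Ioc (0:ℝ) (z/2) ⊆ Set.Ioi 0 := Set.Ioc_subset_Ioi_self
  have hs6 : Set.Ioc (z/2) z ⊆ Set.Ioi (0:ℝ) :=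
    subset_trans Set.Ioc_subset_Ioi_self (Set.Ioi_subset_Ioi (by linarith))
  have e1 : ∫ x in Set.Ioi (0:ℝ), f x
      = (∫ x in Set.Ioc (0:ℝ) (2*z), f x) + ∫ x in Set.Ioi (2*z), f x := by
    rw [← setIntegral_union (Set.Ioc_disjoint_Ioi le_rfl) measurableSet_Ioi
      (hint.mono_set hs1) (hint.mono_set hs2), Set.Ioc_union_Ioi_eq_Ioi (by linarith)]
  have e2 : ∫ x in Set.Ioc (0:ℝ) (2*z), f x
      = (∫ x in Set.Ioc (0:ℝ) z, f x) + ∫ x in Set.Ioc z (2*z), f x := by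
    rw [← setIntegral_union ((Set.Ioc_disjoint_Ioi le_rfl).mono_right
      Set.Ioc_subset_Ioi_self) measurableSet_Ioc
      (hint.mono_set hs3) (hint.mono_set hs4), Set.Ioc_union_Ioc_eq_Ioc hz (by linarith)]
  have e3 : ∫ x in Set.Ioc (0:ℝ) z, f x
      = (∫ x in Set.Ioc (0:ℝ) (z/2), f x) + ∫ x in Set.Ioc (z/2) z, f x := by
    rw [← setIntegral_union ((Set.Ioc_disjoint_Ioi le_rfl).mono_right
      Set.Ioc_subset_Ioi_self) measurableSet_Ioc
      (hint.mono_set hs5) (hint.mono_set hs6),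
      Set.Ioc_union_Ioc_eq_Ioc (by linarith) (by linarith)]
  -- Piece 1 : Ioc 0 (z/2)
  have P1 : ∫ x in Set.Ioc (0:ℝ) (z/2), f x ≤ 6*(1+z)^(-(1:ℝ)/3) := by
    have hgint : IntegrableOn (fun x : ℝ => (1+z/2)^(-(2:ℝ)/3) * (1+x)^(-(2:ℝ)/3))
        (Set.Ioc (0:ℝ) (z/2)) := by
      apply cont_int
      exact continuousOn_const.mul ((continuous_const.add continuous_id).continuousOn.rpow_const
          (fun x hx => Or.inl (by simp at hx ⊢; nlinarith [hx.1])))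
    have hmono : ∫ x in Set.Ioc (0:ℝ) (z/2), f x
        ≤ ∫ x in Set.Ioc (0:ℝ) (z/2), (1+z/2)^(-(2:ℝ)/3) * (1+x)^(-(2:ℝ)/3) := by
      apply setIntegral_mono_on (hint.mono_set hs5) hgint measurableSet_Ioc
      intro x hx
      have hx1 : 0 < x := hx.1
      have hx2 : x ≤ z/2 := hx.2
      have habs : 1 + z/2 ≤ 1 + |z - x| := by
        have := le_abs_self (z - x); linarith
      apply mul_le_mul_of_nonneg_right _ (Real.rpow_nonneg (by linarith) _)
      exact Real.rpow_le_rpow_of_nonpos hz2 habs (by norm_num)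
    rw [integral_const_mul] at hmono
    have hval : (1+z/2)^(-(2:ℝ)/3) * ∫ x in Set.Ioc (0:ℝ) (z/2), (1+x)^(-(2:ℝ)/3)
        ≤ (1+z/2)^(-(2:ℝ)/3) * (3*(1+z/2)^((1:ℝ)/3)) :=
      mul_le_mul_of_nonneg_left (aux_ioc0 (z/2) (by linarith))
        (Real.rpow_nonneg hz2.le _)
    have hcomb : (1+z/2)^(-(2:ℝ)/3) * (3*(1+z/2)^((1:ℝ)/3)) = 3*(1+z/2)^(-(1:ℝ)/3) := by
      rw [show (1+z/2)^(-(2:ℝ)/3) * (3*(1+z/2)^((1:ℝ)/3))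
        = 3*((1+z/2)^(-(2:ℝ)/3) * (1+z/2)^((1:ℝ)/3)) by ring, ← Real.rpow_add hz2]
      norm_num
    have := half_bound z hz
    linarith
  -- Piece 2 : Ioc (z/2) z
  have P2 : ∫ x in Set.Ioc (z/2) z, f x ≤ 6*(1+z)^(-(1:ℝ)/3) := by
    have hgint : IntegrableOn (fun x : ℝ => (1+z/2)^(-(2:ℝ)/3) * (1+(z-x))^(-(2:ℝ)/3))
        (Set.Ioc (z/2) z) := by
      apply cont_int
      exact continuousOn_const.mul
        ((continuous_const.add (continuous_const.sub continuous_id)).continuousOn.rpow_const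
          (fun x hx => Or.inl (by simp at hx ⊢; nlinarith [hx.2])))
    have hmono : ∫ x in Set.Ioc (z/2) z, f x
        ≤ ∫ x in Set.Ioc (z/2) z, (1+z/2)^(-(2:ℝ)/3) * (1+(z-x))^(-(2:ℝ)/3) := by
      apply setIntegral_mono_on (hint.mono_set hs6) hgint measurableSet_Ioc
      intro x hx
      have hx1 : z/2 < x := hx.1
      have hx2 : x ≤ z := hx.2
      have habs : |z - x| = z - x := abs_of_nonneg (by linarith)
      rw [habs, mul_comm ((1+z/2)^(-(2:ℝ)/3))]
      apply mul_le_mul_of_nonneg_left _ (Real.rpow_nonneg (by linarith) _)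
      exact Real.rpow_le_rpow_of_nonpos hz2 (by linarith) (by norm_num)
    rw [integral_const_mul] at hmono
    have hinner : ∫ x in Set.Ioc (z/2) z, (1+(z-x))^(-(2:ℝ)/3)
        ≤ 3*(1+z/2)^((1:ℝ)/3) := by
      rw [← intervalIntegral.integral_of_le (by linarith)]
      rw [intervalIntegral.integral_comp_sub_left (fun u => (1+u)^(-(2:ℝ)/3)) z]
      rw [show z - z = 0 by ring, show z - z/2 = z/2 by ring]
      rw [intervalIntegral.integral_of_le (by linarith)]
      exact aux_ioc0 (z/2) (by linarith)
    have hval : (1+z/2)^(-(2:ℝ)/3) * ∫ x in Set.Ioc (z/2) z, (1+(z-x))^(-(2:ℝ)/3)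
        ≤ (1+z/2)^(-(2:ℝ)/3) * (3*(1+z/2)^((1:ℝ)/3)) :=
      mul_le_mul_of_nonneg_left hinner (Real.rpow_nonneg hz2.le _)
    have hcomb : (1+z/2)^(-(2:ℝ)/3) * (3*(1+z/2)^((1:ℝ)/3)) = 3*(1+z/2)^(-(1:ℝ)/3) := by
      rw [show (1+z/2)^(-(2:ℝ)/3) * (3*(1+z/2)^((1:ℝ)/3))
        = 3*((1+z/2)^(-(2:ℝ)/3) * (1+z/2)^((1:ℝ)/3)) by ring, ← Real.rpow_add hz2]
      norm_num
    have := half_bound z hz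
    linarith
  -- Piece 3 : Ioc z (2z)
  have P3 : ∫ x in Set.Ioc z (2*z), f x ≤ 6*(1+z)^(-(1:ℝ)/3) := by
    have hgint : IntegrableOn (fun x : ℝ => (1+z)^(-(2:ℝ)/3) * (1+(x-z))^(-(2:ℝ)/3))
        (Set.Ioc z (2*z)) := by
      apply cont_int
      exact continuousOn_const.mul
        ((continuous_const.add (continuous_id.sub continuous_const)).continuousOn.rpow_const
          (fun x hx => Or.inl (by simp at hx ⊢; nlinarith [hx.1])))
    have hmono : ∫ x in Set.Ioc z (2*z), f x
        ≤ ∫ x in Set.Ioc z (2*z), (1+z)^(-(2:ℝ)/3) * (1+(x-z))^(-(2:ℝ)/3) := by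
      apply setIntegral_mono_on (hint.mono_set hs4) hgint measurableSet_Ioc
      intro x hx
      have hx1 : z < x := hx.1
      have hx2 : x ≤ 2*z := hx.2
      have habs : |z - x| = x - z := by rw [abs_sub_comm]; exact abs_of_nonneg (by linarith)
      rw [habs, mul_comm ((1+z)^(-(2:ℝ)/3))]
      apply mul_le_mul_of_nonneg_left _ (Real.rpow_nonneg (by linarith) _)
      exact Real.rpow_le_rpow_of_nonpos hz1 (by linarith) (by norm_num)
    rw [integral_const_mul] at hmono
    have hinner : ∫ x in Set.Ioc z (2*z), (1+(x-z))^(-(2:ℝ)/3)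
        ≤ 3*(1+z)^((1:ℝ)/3) := by
      rw [← intervalIntegral.integral_of_le (by linarith)]
      rw [intervalIntegral.integral_comp_sub_right (fun u => (1+u)^(-(2:ℝ)/3)) z]
      rw [show z - z = 0 by ring, show 2*z - z = z by ring]
      rw [intervalIntegral.integral_of_le hz]
      exact aux_ioc0 z hz
    have hval : (1+z)^(-(2:ℝ)/3) * ∫ x in Set.Ioc z (2*z), (1+(x-z))^(-(2:ℝ)/3)
        ≤ (1+z)^(-(2:ℝ)/3) * (3*(1+z)^((1:ℝ)/3)) :=
      mul_le_mul_of_nonneg_left hinner (Real.rpow_nonneg hz1.le _)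
    have hcomb : (1+z)^(-(2:ℝ)/3) * (3*(1+z)^((1:ℝ)/3)) = 3*(1+z)^(-(1:ℝ)/3) := by
      rw [show (1+z)^(-(2:ℝ)/3) * (3*(1+z)^((1:ℝ)/3))
        = 3*((1+z)^(-(2:ℝ)/3) * (1+z)^((1:ℝ)/3)) by ring, ← Real.rpow_add hz1]
      norm_num
    linarith
  -- Piece 4 : Ioi (2z)
  have P4 : ∫ x in Set.Ioi (2*z), f x ≤ 6*(1+z)^(-(1:ℝ)/3) := by
    have hgint : IntegrableOn (fun x : ℝ => 2*(1+x)^(-(4:ℝ)/3)) (Set.Ioi (2*z)) := by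
      have hg : Integrable (fun x : ℝ => 2*(1 + ‖x‖)^(-(4:ℝ)/3)) := by
        have := integrable_one_add_norm (E := ℝ) (μ := volume) (r := (4:ℝ)/3) (by simp; norm_num)
        rw [show (-(4:ℝ)/3) = -((4:ℝ)/3) by norm_num]
        exact this.const_mul _
      apply (hg.integrableOn).congr_fun _ measurableSet_Ioi
      intro x hx
      have hx0 : (0:ℝ) < x := lt_of_le_of_lt (by linarith) hx
      simp [Real.norm_of_nonneg hx0.le]
    have hmono : ∫ x in Set.Ioi (2*z), f x
        ≤ ∫ x in Set.Ioi (2*z), 2*(1+x)^(-(4:ℝ)/3) := by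
      apply setIntegral_mono_on (hint.mono_set hs2) hgint measurableSet_Ioi
      intro x hx
      have hx1 : 2*z < x := hx
      have hx0 : (0:ℝ) < x := lt_of_le_of_lt (by linarith) hx1
      have hB : (0:ℝ) < 1 + x := by linarith
      have habs : |z - x| = x - z := by rw [abs_sub_comm]; exact abs_of_nonneg (by linarith)
      have key : (1+x)/2 ≤ 1 + |z - x| := by rw [habs]; linarith
      have h1 : (1+|z-x|)^(-(2:ℝ)/3) ≤ ((1+x)/2)^(-(2:ℝ)/3) :=
        Real.rpow_le_rpow_of_nonpos (by positivity) key (by norm_num)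
      have h2 : ((1+x)/2)^(-(2:ℝ)/3) = (2:ℝ)^((2:ℝ)/3) * (1+x)^(-(2:ℝ)/3) :=
        aux_div23 (1+x) 2 hB two_pos
      have h23 : (2:ℝ)^((2:ℝ)/3) ≤ 2 := by
        calc (2:ℝ)^((2:ℝ)/3) ≤ (2:ℝ)^(1:ℝ) :=
              Real.rpow_le_rpow_of_exponent_le one_le_two (by norm_num)
          _ = 2 := Real.rpow_one 2
      calc f x ≤ ((1+x)/2)^(-(2:ℝ)/3) * (1+x)^(-(2:ℝ)/3) :=
            mul_le_mul_of_nonneg_right h1 (Real.rpow_nonneg hB.le _)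
        _ = (2:ℝ)^((2:ℝ)/3) * ((1+x)^(-(2:ℝ)/3) * (1+x)^(-(2:ℝ)/3)) := by rw [h2]; ring
        _ = (2:ℝ)^((2:ℝ)/3) * (1+x)^(-(4:ℝ)/3) := by rw [← Real.rpow_add hB]; norm_num
        _ ≤ 2 * (1+x)^(-(4:ℝ)/3) :=
            mul_le_mul_of_nonneg_right h23 (Real.rpow_nonneg hB.le _)
    rw [integral_const_mul, aux_ioi (2*z) (by linarith)] at hmono
    have hle : (1+2*z)^(-(1:ℝ)/3) ≤ (1+z)^(-(1:ℝ)/3) :=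
      Real.rpow_le_rpow_of_nonpos hz1 (by linarith) (by norm_num)
    linarith
  rw [e1, e2, e3]
  linarith
end

section
/- For all z ≥ 0, the integral ∫₀^∞ (1+|z-z'|)^{-1} (1+z')^{-2/3} dz' is bounded by C · ln(2+z) · (1+z)^{-2/3} for a universal constant C. -/
open MeasureTheory Real Set

lemma int_pow23 {c : ℝ} (hc : 0 ≤ c) :
    ∫ x in (0:ℝ)..c, (1+x)^(-(2:ℝ)/3) = 3*(1+c)^((1:ℝ)/3) - 3 := by
  have h : ∀ x ∈ uIcc (0:ℝ) c, HasDerivAt (fun y => 3*(1+y)^((1:ℝ)/3)) ((1+x)^(-(2:ℝ)/3)) x := by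
    intro x hx
    rw [uIcc_of_le hc] at hx
    have hx0 : (0:ℝ) < 1 + x := by linarith [hx.1]
    have h1 : HasDerivAt (fun y : ℝ => 1 + y) 1 x := by
      simpa using (hasDerivAt_id x).const_add 1
    have h2 := (h1.rpow_const (p := (1:ℝ)/3) (Or.inl hx0.ne'))
    have h3 := h2.const_mul (3:ℝ)
    refine h3.congr_deriv ?_
    rw [show (1:ℝ)/3 - 1 = -(2:ℝ)/3 by norm_num]
    ring
  rw [intervalIntegral.integral_eq_sub_of_hasDerivAt h ?_]
  · norm_num
  · apply ContinuousOn.intervalIntegrable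
    apply ContinuousOn.rpow_const (by fun_prop)
    intro x hx
    rw [uIcc_of_le hc] at hx
    exact Or.inl (by have := hx.1; intro h; linarith)

lemma int_invL (z a : ℝ) (haz : a ≤ z) :
    ∫ x in a..z, (1+(z-x))⁻¹ = Real.log (1+(z-a)) := by
  have h : ∀ x ∈ uIcc a z, HasDerivAt (fun y => -Real.log (1+(z-y))) ((1+(z-x))⁻¹) x := by
    intro x hx
    rw [uIcc_of_le haz] at hx
    have hx0 : (0:ℝ) < 1 + (z - x) := by linarith [hx.2]
    have h1 : HasDerivAt (fun y : ℝ => 1 + (z - y)) (-1) x := by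
      simpa using ((hasDerivAt_id x).const_sub z).const_add 1
    have h2 := (h1.log hx0.ne').neg
    refine h2.congr_deriv ?_
    rw [neg_div, neg_neg, one_div]
  rw [intervalIntegral.integral_eq_sub_of_hasDerivAt h ?_]
  · simp
  · apply ContinuousOn.intervalIntegrable
    apply ContinuousOn.inv₀ (by fun_prop)
    intro x hx
    rw [uIcc_of_le haz] at hx
    have := hx.2; intro h; linarith

lemma int_invR (z b : ℝ) (hzb : z ≤ b) :
    ∫ x in z..b, (1+(x-z))⁻¹ = Real.log (1+(b-z)) := by
  have h : ∀ x ∈ uIcc z b, HasDerivAt (fun y => Real.log (1+(y-z))) ((1+(x-z))⁻¹) x := by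
    intro x hx
    rw [uIcc_of_le hzb] at hx
    have hx0 : (0:ℝ) < 1 + (x - z) := by linarith [hx.1]
    have h1 : HasDerivAt (fun y : ℝ => 1 + (y - z)) 1 x := by
      simpa using ((hasDerivAt_id x).sub_const z).const_add 1
    have h2 := h1.log hx0.ne'
    convert h2 using 1
    field_simp
  rw [intervalIntegral.integral_eq_sub_of_hasDerivAt h ?_]
  · simp
  · apply ContinuousOn.intervalIntegrable
    apply ContinuousOn.inv₀ (by fun_prop)
    intro x hx
    rw [uIcc_of_le hzb] at hx
    have := hx.1; intro h; linarith

lemma tail_integrable {a : ℝ} (ha : 0 ≤ a) :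
    IntegrableOn (fun x => 2*(1+x)^(-(5:ℝ)/3)) (Ioi a) volume := by
  have hderiv : ∀ x ∈ Ioi a, HasDerivAt (fun y => -3*(1+y)^(-(2:ℝ)/3)) (2*(1+x)^(-(5:ℝ)/3)) x := by
    intro x hx
    have hx0 : (0:ℝ) < 1 + x := by have := hx.out; linarith
    have h1 : HasDerivAt (fun y : ℝ => 1 + y) 1 x := by
      simpa using (hasDerivAt_id x).const_add 1
    have h2 := (h1.rpow_const (p := -(2:ℝ)/3) (Or.inl hx0.ne')).const_mul (-3:ℝ)
    refine h2.congr_deriv ?_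
    rw [show -(2:ℝ)/3 - 1 = -(5:ℝ)/3 by norm_num]
    ring
  apply integrableOn_Ioi_deriv_of_nonneg ?_ hderiv ?_ (l := 0) ?_
  · have hco : ContinuousOn (fun y : ℝ => -3*(1+y)^(-(2:ℝ)/3)) (Ici a) := by
      apply ContinuousOn.mul continuousOn_const
      apply ContinuousOn.rpow_const (by fun_prop)
      intro x hx; exact Or.inl (by have := hx.out; intro h; linarith)
    exact hco a self_mem_Ici
  · intro x hx
    have hx0 : (0:ℝ) < 1 + x := by have := hx.out; linarith
    positivity
  · rw [show (0:ℝ) = -3 * 0 by ring]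
    apply Filter.Tendsto.const_mul
    rw [show (-(2:ℝ)/3) = -(2/3) by norm_num]
    apply Filter.Tendsto.comp (tendsto_rpow_neg_atTop (by norm_num))
    exact Filter.tendsto_atTop_add_const_left _ 1 Filter.tendsto_id

lemma tail_value {a : ℝ} (ha : 0 ≤ a) :
    ∫ x in Ioi a, 2*(1+x)^(-(5:ℝ)/3) = 3*(1+a)^(-(2:ℝ)/3) := by
  have hderiv : ∀ x ∈ Ioi a, HasDerivAt (fun y => -3*(1+y)^(-(2:ℝ)/3)) (2*(1+x)^(-(5:ℝ)/3)) x := by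
    intro x hx
    have hx0 : (0:ℝ) < 1 + x := by have := hx.out; linarith
    have h1 : HasDerivAt (fun y : ℝ => 1 + y) 1 x := by
      simpa using (hasDerivAt_id x).const_add 1
    have h2 := (h1.rpow_const (p := -(2:ℝ)/3) (Or.inl hx0.ne')).const_mul (-3:ℝ)
    refine h2.congr_deriv ?_
    rw [show -(2:ℝ)/3 - 1 = -(5:ℝ)/3 by norm_num]
    ring
  rw [integral_Ioi_of_hasDerivAt_of_tendsto ?_ hderiv (tail_integrable ha) (m := 0) ?_]
  · ring
  · have hco : ContinuousOn (fun y : ℝ => -3*(1+y)^(-(2:ℝ)/3)) (Ici a) := by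
      apply ContinuousOn.mul continuousOn_const
      apply ContinuousOn.rpow_const (by fun_prop)
      intro x hx; exact Or.inl (by have := hx.out; intro h; linarith)
    exact hco a self_mem_Ici
  · rw [show (0:ℝ) = -3 * 0 by ring]
    apply Filter.Tendsto.const_mul
    rw [show (-(2:ℝ)/3) = -(2/3) by norm_num]
    apply Filter.Tendsto.comp (tendsto_rpow_neg_atTop (by norm_num))
    exact Filter.tendsto_atTop_add_const_left _ 1 Filter.tendsto_id
open MeasureTheory Real Set

theorem integral_bound_1 :
    ∃ C : ℝ, 0 < C ∧ ∀ z : ℝ, 0 ≤ z →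
      (∫ z' in Set.Ioi (0:ℝ), (1 + |z - z'|)⁻¹ * (1 + z') ^ (-(2:ℝ)/3))
        ≤ C * Real.log (2 + z) * (1 + z) ^ (-(2:ℝ)/3) := by
  refine ⟨30, by norm_num, ?_⟩
  intro z hz
  set F : ℝ → ℝ := fun z' => (1 + |z - z'|)⁻¹ * (1 + z') ^ (-(2:ℝ)/3) with hFdef
  have h1z : (0:ℝ) < 1 + z := by linarith
  have hA : (0:ℝ) ≤ (1+z)^(-(2:ℝ)/3) := Real.rpow_nonneg h1z.le _
  have hL : Real.log 2 ≤ Real.log (2+z) := Real.log_le_log (by norm_num) (by linarith)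
  -- continuity
  have hFcont : ContinuousOn F (Ici 0) := by
    apply ContinuousOn.mul
    · apply ContinuousOn.inv₀ (by fun_prop)
      intro x hx h
      have : (0:ℝ) ≤ |z - x| := abs_nonneg _
      linarith
    · apply ContinuousOn.rpow_const (by fun_prop)
      intro x hx
      exact Or.inl (by have := hx.out; intro h; linarith)
  have hFii : ∀ a b : ℝ, 0 ≤ a → a ≤ b → IntervalIntegrable F volume a b := by
    intro a b ha hab
    exact (hFcont.mono (by rw [uIcc_of_le hab]; intro x hx; exact le_trans ha hx.1)).intervalIntegrable
  -- tail pointwise bound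
  have htail_pt : ∀ x ∈ Ioi (2*z+1), F x ≤ 2*(1+x)^(-(5:ℝ)/3) := by
    intro x hx
    have hx1 : 2*z+1 < x := hx.out
    have hx0 : (0:ℝ) < 1 + x := by linarith
    have habs : |z - x| = x - z := by rw [abs_of_nonpos (by linarith)]; ring
    have hinv : (1 + |z - x|)⁻¹ ≤ 2*(1+x)⁻¹ := by
      rw [habs]
      have h2 : ((1+x)/2)⁻¹ = 2*(1+x)⁻¹ := by field_simp
      rw [← h2]
      exact inv_anti₀ (by linarith) (by linarith)
    have hmul : (1+x)⁻¹ * (1+x)^(-(2:ℝ)/3) = (1+x)^(-(5:ℝ)/3) := by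
      rw [← Real.rpow_neg_one (1+x), ← Real.rpow_add hx0]
      norm_num
    calc F x ≤ (2*(1+x)⁻¹) * (1+x)^(-(2:ℝ)/3) :=
          mul_le_mul_of_nonneg_right hinv (Real.rpow_nonneg hx0.le _)
      _ = 2*(1+x)^(-(5:ℝ)/3) := by rw [mul_assoc, hmul]
  have hb0 : (0:ℝ) ≤ 2*z+1 := by linarith
  have htail_int : IntegrableOn F (Ioi (2*z+1)) volume := by
    apply Integrable.mono (tail_integrable hb0)
    · exact (hFcont.mono (fun x hx => le_trans hb0 (le_of_lt hx.out))).aestronglyMeasurable measurableSet_Ioi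
    · filter_upwards [ae_restrict_mem measurableSet_Ioi] with x hx
      have hx0 : (0:ℝ) < 1 + x := by have := hx.out; linarith
      have hFnn : 0 ≤ F x := by
        apply mul_nonneg _ (Real.rpow_nonneg hx0.le _)
        have : (0:ℝ) ≤ |z - x| := abs_nonneg _
        positivity
      rw [Real.norm_eq_abs, Real.norm_eq_abs, abs_of_nonneg hFnn, abs_of_nonneg (by positivity)]
      exact htail_pt x hx
  have htail_bd : ∫ x in Ioi (2*z+1), F x ≤ 3*(1+z)^(-(2:ℝ)/3) := by
    calc ∫ x in Ioi (2*z+1), F x ≤ ∫ x in Ioi (2*z+1), 2*(1+x)^(-(5:ℝ)/3) :=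
          setIntegral_mono_on htail_int (tail_integrable hb0) measurableSet_Ioi htail_pt
      _ = 3*(1+(2*z+1))^(-(2:ℝ)/3) := tail_value hb0
      _ ≤ 3*(1+z)^(-(2:ℝ)/3) := by
          have := Real.rpow_le_rpow_of_nonpos h1z (by linarith : 1+z ≤ 1+(2*z+1)) (by norm_num : -(2:ℝ)/3 ≤ 0)
          linarith
  -- split
  have hsplit : ∫ x in Ioi (0:ℝ), F x
      = (∫ x in Ioc (0:ℝ) (2*z+1), F x) + ∫ x in Ioi (2*z+1), F x := by
    rw [← setIntegral_union (Ioc_disjoint_Ioi le_rfl) measurableSet_Ioi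
        (hFii 0 (2*z+1) le_rfl hb0).1 htail_int, Ioc_union_Ioi_eq_Ioi hb0]
  have hmid : ∫ x in Ioc (0:ℝ) (2*z+1), F x = ∫ x in (0:ℝ)..(2*z+1), F x :=
    (intervalIntegral.integral_of_le hb0).symm
  have hz2 : (0:ℝ) ≤ z/2 := by linarith
  have hzz : z/2 ≤ z := by linarith
  have hadd : (∫ x in (0:ℝ)..(z/2), F x) + (∫ x in (z/2)..z, F x) + (∫ x in z..(2*z+1), F x)
      = ∫ x in (0:ℝ)..(2*z+1), F x := by
    rw [intervalIntegral.integral_add_adjacent_intervals (hFii 0 (z/2) le_rfl hz2) (hFii (z/2) z hz2 hzz),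
        intervalIntegral.integral_add_adjacent_intervals (hFii 0 z le_rfl hz) (hFii z (2*z+1) hz (by linarith))]
  -- piece 1
  have hB1 : ∫ x in (0:ℝ)..(z/2), F x ≤ 6*(1+z)^(-(2:ℝ)/3) := by
    have hpt : ∀ x ∈ Icc (0:ℝ) (z/2), F x ≤ (2*(1+z)⁻¹) * (1+x)^(-(2:ℝ)/3) := by
      intro x hx
      have hx0 : (0:ℝ) ≤ x := hx.1
      have hxz : x ≤ z/2 := hx.2
      have habs : |z - x| = z - x := abs_of_nonneg (by linarith)
      have hinv : (1 + |z - x|)⁻¹ ≤ 2*(1+z)⁻¹ := by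
        rw [habs]
        have h2 : ((1+z)/2)⁻¹ = 2*(1+z)⁻¹ := by field_simp
        rw [← h2]
        exact inv_anti₀ (by linarith) (by linarith)
      exact mul_le_mul_of_nonneg_right hinv (Real.rpow_nonneg (by linarith) _)
    have hgii : IntervalIntegrable (fun x => (2*(1+z)⁻¹) * (1+x)^(-(2:ℝ)/3)) volume 0 (z/2) := by
      apply ContinuousOn.intervalIntegrable
      apply ContinuousOn.mul continuousOn_const
      apply ContinuousOn.rpow_const (by fun_prop)
      intro x hx
      rw [uIcc_of_le hz2] at hx
      exact Or.inl (by have := hx.1; intro h; linarith)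
    calc ∫ x in (0:ℝ)..(z/2), F x
        ≤ ∫ x in (0:ℝ)..(z/2), (2*(1+z)⁻¹) * (1+x)^(-(2:ℝ)/3) :=
          intervalIntegral.integral_mono_on hz2 (hFii 0 (z/2) le_rfl hz2) hgii hpt
      _ = (2*(1+z)⁻¹) * (3*(1+z/2)^((1:ℝ)/3) - 3) := by
          rw [intervalIntegral.integral_const_mul, int_pow23 hz2]
      _ ≤ (2*(1+z)⁻¹) * (3*(1+z)^((1:ℝ)/3)) := by
          apply mul_le_mul_of_nonneg_left _ (by positivity)
          have h13 : (1+z/2)^((1:ℝ)/3) ≤ (1+z)^((1:ℝ)/3) :=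
            Real.rpow_le_rpow (by linarith) (by linarith) (by norm_num)
          linarith
      _ = 6*(1+z)^(-(2:ℝ)/3) := by
          rw [← Real.rpow_neg_one (1+z)]
          rw [show (2:ℝ)*(1+z)^(-1:ℝ) * (3*(1+z)^((1:ℝ)/3)) = 6*((1+z)^(-1:ℝ)*(1+z)^((1:ℝ)/3)) by ring,
            ← Real.rpow_add h1z]
          norm_num
  -- piece 2
  have hB2 : ∫ x in (z/2)..z, F x ≤ 2*(1+z)^(-(2:ℝ)/3) * Real.log (2+z) := by
    set c : ℝ := (2:ℝ)^((2:ℝ)/3) * (1+z)^(-(2:ℝ)/3) with hc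
    have hcnn : 0 ≤ c := by positivity
    have hpt : ∀ x ∈ Icc (z/2) z, F x ≤ c * (1+(z-x))⁻¹ := by
      intro x hx
      have habs : |z - x| = z - x := abs_of_nonneg (by linarith [hx.2])
      have hhalf : (0:ℝ) < (1+z)/2 := by linarith
      have hle : (1+z)/2 ≤ 1+x := by linarith [hx.1]
      have hrw : ((1+z)/2) ^ (-(2:ℝ)/3) = c := by
        rw [hc, show (-(2:ℝ)/3) = -((2:ℝ)/3) by norm_num,
          Real.rpow_neg (by linarith : (0:ℝ) ≤ (1+z)/2),
          Real.rpow_neg h1z.le,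
          div_rpow h1z.le (by norm_num : (0:ℝ) ≤ 2), inv_div, div_eq_mul_inv]
      have hx23 : (1+x)^(-(2:ℝ)/3) ≤ c := by
        rw [← hrw]
        exact Real.rpow_le_rpow_of_nonpos hhalf hle (by norm_num)
      have hinvnn : (0:ℝ) ≤ (1+(z-x))⁻¹ := by
        have : (0:ℝ) ≤ z - x := by linarith [hx.2]
        positivity
      calc F x = (1+(z-x))⁻¹ * (1+x)^(-(2:ℝ)/3) := by rw [hFdef]; simp only []; rw [habs]
        _ ≤ (1+(z-x))⁻¹ * c := mul_le_mul_of_nonneg_left hx23 hinvnn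
        _ = c * (1+(z-x))⁻¹ := by ring
    have hgii : IntervalIntegrable (fun x => c * (1+(z-x))⁻¹) volume (z/2) z := by
      apply ContinuousOn.intervalIntegrable
      apply ContinuousOn.mul continuousOn_const
      apply ContinuousOn.inv₀ (by fun_prop)
      intro x hx
      rw [uIcc_of_le hzz] at hx
      have := hx.2; intro h; linarith
    have h223 : (2:ℝ)^((2:ℝ)/3) ≤ 2 := by
      calc (2:ℝ)^((2:ℝ)/3) ≤ 2^(1:ℝ) := Real.rpow_le_rpow_of_exponent_le (by norm_num) (by norm_num)
        _ = 2 := Real.rpow_one 2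
    calc ∫ x in (z/2)..z, F x ≤ ∫ x in (z/2)..z, c * (1+(z-x))⁻¹ :=
          intervalIntegral.integral_mono_on hzz (hFii (z/2) z hz2 hzz) hgii hpt
      _ = c * Real.log (1+(z-z/2)) := by
          rw [intervalIntegral.integral_const_mul, int_invL z (z/2) hzz]
      _ ≤ c * Real.log (2+z) := by
          apply mul_le_mul_of_nonneg_left _ hcnn
          apply Real.log_le_log <;> linarith
      _ ≤ 2*(1+z)^(-(2:ℝ)/3) * Real.log (2+z) := by
          apply mul_le_mul_of_nonneg_right _ (le_trans (Real.log_nonneg (by norm_num)) hL)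
          rw [hc]
          exact mul_le_mul_of_nonneg_right h223 hA
  -- piece 3
  have hB3 : ∫ x in z..(2*z+1), F x ≤ (1+z)^(-(2:ℝ)/3) * Real.log (2+z) := by
    have hzb : z ≤ 2*z+1 := by linarith
    have hpt : ∀ x ∈ Icc z (2*z+1), F x ≤ (1+z)^(-(2:ℝ)/3) * (1+(x-z))⁻¹ := by
      intro x hx
      have habs : |z - x| = x - z := by rw [abs_of_nonpos (by linarith [hx.1])]; ring
      have hx23 : (1+x)^(-(2:ℝ)/3) ≤ (1+z)^(-(2:ℝ)/3) :=
        Real.rpow_le_rpow_of_nonpos h1z (by linarith [hx.1]) (by norm_num)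
      have hinvnn : (0:ℝ) ≤ (1+(x-z))⁻¹ := by
        have : (0:ℝ) ≤ x - z := by linarith [hx.1]
        positivity
      calc F x = (1+(x-z))⁻¹ * (1+x)^(-(2:ℝ)/3) := by rw [hFdef]; simp only []; rw [habs]
        _ ≤ (1+(x-z))⁻¹ * (1+z)^(-(2:ℝ)/3) := mul_le_mul_of_nonneg_left hx23 hinvnn
        _ = (1+z)^(-(2:ℝ)/3) * (1+(x-z))⁻¹ := by ring
    have hgii : IntervalIntegrable (fun x => (1+z)^(-(2:ℝ)/3) * (1+(x-z))⁻¹) volume z (2*z+1) := by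
      apply ContinuousOn.intervalIntegrable
      apply ContinuousOn.mul continuousOn_const
      apply ContinuousOn.inv₀ (by fun_prop)
      intro x hx
      rw [uIcc_of_le hzb] at hx
      have := hx.1; intro h; linarith
    calc ∫ x in z..(2*z+1), F x ≤ ∫ x in z..(2*z+1), (1+z)^(-(2:ℝ)/3) * (1+(x-z))⁻¹ :=
          intervalIntegral.integral_mono_on hzb (hFii z (2*z+1) hz hzb) hgii hpt
      _ = (1+z)^(-(2:ℝ)/3) * Real.log (1+(2*z+1-z)) := by
          rw [intervalIntegral.integral_const_mul, int_invR z (2*z+1) hzb]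
      _ = (1+z)^(-(2:ℝ)/3) * Real.log (2+z) := by rw [show 1+(2*z+1-z) = 2+z by ring]
  -- combine
  have hlog2 : (0.6931471803:ℝ) < Real.log (2+z) := lt_of_lt_of_le Real.log_two_gt_d9 hL
  have : ∫ x in Ioi (0:ℝ), F x
      ≤ 9*(1+z)^(-(2:ℝ)/3) + 3*(1+z)^(-(2:ℝ)/3) * Real.log (2+z) := by
    rw [hsplit, hmid, ← hadd]
    linarith
  calc ∫ x in Ioi (0:ℝ), F x ≤ 9*(1+z)^(-(2:ℝ)/3) + 3*(1+z)^(-(2:ℝ)/3) * Real.log (2+z) := this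
    _ ≤ 30 * Real.log (2+z) * (1+z)^(-(2:ℝ)/3) := by nlinarith [hA, hlog2]
end

section
/- For every ξ ∈ ℝ² with ξ ≠ 0, the polynomial equation -λ² - (λ² - |ξ|²)³ = 0 in the complex variable λ has exactly six roots counted with multiplicity, which can be grouped as ±λ₁, ±λ₂, ±λ₃ where λ₁ is real positive, λ₂ and λ₃ have positive real part, and λ₃ is the complex conjugate of λ₂. -/
open Complex

/-- Any complex number with nonzero imaginary part has a square root with positive real part. -/
lemma exists_sqrt_pos_re (w : ℂ) (hw : w.im ≠ 0) : ∃ z : ℂ, 0 < z.re ∧ z ^ 2 = w := by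
  obtain ⟨z, hz⟩ := IsAlgClosed.exists_pow_nat_eq w (n := 2) (by norm_num)
  have hre : z.re ≠ 0 := by
    intro h
    apply hw
    rw [← hz]
    simp [pow_two, Complex.mul_im, h]
  rcases hre.lt_or_gt with h | h
  · exact ⟨-z, by simpa using h, by rw [neg_sq]; exact hz⟩
  · exact ⟨z, h, hz⟩

/-- For `ξ ≠ 0`, the equation `-λ² - (λ² - |ξ|²)³ = 0` has exactly six roots counted with
multiplicity, grouped as `±λ₁, ±λ₂, ±λ₃` with `λ₁` real positive, `Re λ₂, Re λ₃ > 0`,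
and `λ₃ = conj λ₂`. -/
theorem characteristic_roots (ξ : EuclideanSpace ℝ (Fin 2)) (hξ : ξ ≠ 0) :
    ∃ lam₁ lam₂ lam₃ : ℂ,
      lam₁.im = 0 ∧ 0 < lam₁.re ∧ 0 < lam₂.re ∧ 0 < lam₃.re ∧
      lam₃ = starRingEnd ℂ lam₂ ∧
      ∀ lam : ℂ,
        -lam ^ 2 - (lam ^ 2 - ((‖ξ‖ : ℂ)) ^ 2) ^ 3
          = -((lam - lam₁) * (lam + lam₁) * (lam - lam₂) * (lam + lam₂) *
              (lam - lam₃) * (lam + lam₃)) := by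
  have hr : (0:ℝ) < ‖ξ‖ := norm_pos_iff.mpr hξ
  set R : ℝ := ‖ξ‖^2 with hRdef
  have hR : 0 < R := by positivity
  -- real root of t³ + t + R = 0 by IVT
  obtain ⟨t₁, ht₁mem, ht₁⟩ : ∃ t ∈ Set.Icc (-R) 0, t^3 + t + R = 0 := by
    have hcont : ContinuousOn (fun t : ℝ => t^3 + t + R) (Set.Icc (-R) 0) :=
      (by continuity : Continuous fun t : ℝ => t^3 + t + R).continuousOn
    have hsub := intermediate_value_Icc (by linarith : -R ≤ 0) hcont
    have h0 : (0:ℝ) ∈ Set.Icc ((-R)^3 + -R + R) ((0:ℝ)^3 + 0 + R) := by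
      constructor <;> nlinarith [pow_pos hR 3]
    obtain ⟨t, htmem, ht⟩ := hsub h0
    exact ⟨t, htmem, ht⟩
  have ht₁neg : t₁ < 0 := by
    rcases lt_or_eq_of_le ht₁mem.2 with h | h
    · exact h
    · exfalso; rw [h] at ht₁; norm_num at ht₁; linarith
  have ht₁cube : t₁^3 < 0 := by
    nlinarith [mul_pos (mul_pos (neg_pos.2 ht₁neg) (neg_pos.2 ht₁neg)) (neg_pos.2 ht₁neg)]
  have hμ₁pos : 0 < t₁ + R := by linarith
  set lam₁ : ℂ := ((Real.sqrt (t₁ + R) : ℝ) : ℂ) with hlam₁def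
  have e1 : lam₁^2 = ((t₁ + R : ℝ) : ℂ) := by
    rw [hlam₁def]
    push_cast
    rw [← Complex.ofReal_pow]
    · norm_num [Real.sq_sqrt hμ₁pos.le]
  set s : ℝ := Real.sqrt (3*t₁^2 + 4) with hsdef
  have hs2 : s^2 = 3*t₁^2 + 4 := Real.sq_sqrt (by positivity)
  have hspos : 0 < s := Real.sqrt_pos.mpr (by positivity)
  set μ₂ : ℂ := (((2*R - t₁)/2 : ℝ) : ℂ) + ((s/2 : ℝ) : ℂ) * Complex.I with hμ₂def
  have hμ₂im : μ₂.im ≠ 0 := by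
    have : μ₂.im = s/2 := by simp [hμ₂def]
    rw [this]; positivity
  obtain ⟨lam₂, hlam₂re, hlam₂sq⟩ := exists_sqrt_pos_re μ₂ hμ₂im
  set lam₃ : ℂ := starRingEnd ℂ lam₂ with hlam₃def
  have hconjμ₂ : starRingEnd ℂ μ₂ = (((2*R - t₁)/2 : ℝ) : ℂ) - ((s/2 : ℝ) : ℂ) * Complex.I := by
    rw [hμ₂def, map_add, map_mul, Complex.conj_ofReal, Complex.conj_ofReal, Complex.conj_I]
    ring
  have hlam₃sq : lam₃^2 = starRingEnd ℂ μ₂ := by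
    rw [hlam₃def, ← map_pow, hlam₂sq]
  have hsum : lam₂^2 + lam₃^2 = ((2*R - t₁ : ℝ) : ℂ) := by
    rw [hlam₂sq, hlam₃sq, hconjμ₂, hμ₂def]
    push_cast
    ring
  have hprod : lam₂^2 * lam₃^2 = ((t₁^2 - R*t₁ + R^2 + 1 : ℝ) : ℂ) := by
    rw [hlam₂sq, hlam₃sq, hconjμ₂, hμ₂def]
    have hs2c : ((s:ℂ))^2 = 3*(t₁:ℂ)^2 + 4 := by exact_mod_cast congrArg (Complex.ofReal) hs2
    push_cast
    linear_combination (-1/4 : ℂ) * Complex.I_sq * ((s:ℂ))^2 + (1/4 : ℂ) * hs2c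
  -- move to complex casts
  set T : ℂ := (t₁ : ℂ) with hTdef
  set r : ℂ := ((‖ξ‖ : ℝ) : ℂ) with hrdef
  have hRc : ((R:ℝ):ℂ) = r^2 := by rw [hRdef]; push_cast; ring
  have eroot : T^3 + T + r^2 = 0 := by
    rw [hTdef, ← hRc]
    exact_mod_cast congrArg (Complex.ofReal) ht₁
  have e1' : lam₁^2 = T + r^2 := by rw [e1, ← hRc]; push_cast; ring
  have hsum' : lam₂^2 + lam₃^2 = 2*r^2 - T := by rw [hsum, ← hRc]; push_cast; ring
  have hprod' : lam₂^2 * lam₃^2 = T^2 - r^2*T + r^4 + 1 := by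
    rw [hprod]
    have : ((R:ℝ):ℂ) = r^2 := hRc
    push_cast [this]
    ring
  have hA : lam₁^2 + lam₂^2 + lam₃^2 = 3*r^2 := by linear_combination e1' + hsum'
  have hB : lam₁^2*lam₂^2 + lam₁^2*lam₃^2 + lam₂^2*lam₃^2 = 3*r^4 + 1 := by
    linear_combination lam₁^2 * hsum' + (2*r^2 - T) * e1' + hprod'
  have hC : lam₁^2 * lam₂^2 * lam₃^2 = r^6 := by
    linear_combination lam₁^2 * hprod' + (T^2 - r^2*T + r^4 + 1) * e1' + eroot
  refine ⟨lam₁, lam₂, lam₃, by simp [hlam₁def], ?_, hlam₂re, ?_, hlam₃def, ?_⟩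
  · simp only [hlam₁def, Complex.ofReal_re]
    exact Real.sqrt_pos.mpr hμ₁pos
  · rw [hlam₃def]
    simpa using hlam₂re
  · intro lam
    linear_combination (-(lam^2)^2) * hA + (lam^2) * hB - hC
end

section
/- As ξ → 0 in ℝ², the roots λ₁(ξ), λ₂(ξ), λ₃(ξ) of -λ² - (λ²-|ξ|²)³ = 0 with positive real part (λ₁ real) satisfy λ₁(ξ) = |ξ|³ + O(|ξ|⁵), λ₂(ξ) = e^{iπ/4} + O(|ξ|²), λ₃(ξ) = e^{-iπ/4} + O(|ξ|²). -/
open Complex Asymptotics Filter Topology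

set_option maxHeartbeats 800000

lemma poly_est (t : ℝ) (h0 : 0 < t) (h : t ≤ 1/2) : (1-2*t)^2 ≤ (1-t^2)^3 := by
  have h1 : t^2 ≤ t/2 := by nlinarith
  have h2 : t^6 ≤ 3*t^4 := by nlinarith [pow_nonneg h0.le 4]
  nlinarith [h1, h2, h0]

lemma real_root_est (l r : ℝ) (hl : 0 < l) (hr : 0 < r) (hr1 : r ≤ 1)
    (heq : l ^ 2 = (r ^ 2 - l ^ 2) ^ 3) : |l - r ^ 3| ≤ 2 * r ^ 5 := by
  have hu : 0 < r ^ 2 - l ^ 2 := by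
    by_contra h
    push_neg at h
    nlinarith [sq_nonneg (r ^ 2 - l ^ 2), mul_nonneg (neg_nonneg.2 h) (sq_nonneg (r ^ 2 - l ^ 2)), sq_nonneg l]
  have h1 : l ^ 2 ≤ r ^ 6 := by
    have := pow_le_pow_left₀ hu.le (by nlinarith : r ^ 2 - l ^ 2 ≤ r ^ 2) 3
    nlinarith
  have hle : l ≤ r ^ 3 := by nlinarith [pow_pos hr 3]
  have hge : r ^ 3 - 2 * r ^ 5 ≤ l := by
    rcases le_or_gt (r ^ 3 - 2 * r ^ 5) 0 with h | h
    · linarith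
    · have ht : r ^ 2 ≤ 1 / 2 := by nlinarith [pow_pos hr 3, pow_pos hr 5]
      have h2 : (r ^ 2 - r ^ 6) ^ 3 ≤ l ^ 2 := by
        have hb : 0 ≤ r ^ 2 - r ^ 6 := by nlinarith
        have := pow_le_pow_left₀ hb (by nlinarith : r ^ 2 - r ^ 6 ≤ r ^ 2 - l ^ 2) 3
        nlinarith
      have h3 : (r ^ 3 - 2 * r ^ 5) ^ 2 ≤ (r ^ 2 - r ^ 6) ^ 3 := by
        have hp := poly_est (r ^ 2) (pow_pos hr 2) (by linarith)
        have h4 := mul_le_mul_of_nonneg_left hp (by positivity : (0:ℝ) ≤ (r ^ 2) ^ 3)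
        nlinarith [h4]
      nlinarith [h2, h3, pow_pos hr 3]
  rw [abs_le]; constructor <;> nlinarith

lemma complex_root_est (l : ℂ) (r : ℝ) (hr : 0 < r) (hr1 : r ≤ 1)
    (hre : 0 < l.re) (him : 0 < l.im)
    (heq : l ^ 2 + (l ^ 2 - (r:ℂ) ^ 2) ^ 3 = 0) :
    ‖l - Complex.exp (Complex.I * Real.pi / 4)‖ ≤ 3 * r ^ 2 := by
  set w : ℂ := l ^ 2 - (r:ℂ) ^ 2 with hwdef
  have hw : w ^ 3 + w + (r:ℂ) ^ 2 = 0 := by rw [hwdef]; linear_combination heq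
  have hwim : w.im = 2 * l.re * l.im := by
    simp [hwdef, sq, Complex.mul_im, Complex.sub_im, Complex.ofReal_im]
    try ring
  have hwre : w.re = l.re ^ 2 - l.im ^ 2 - r ^ 2 := by
    simp [hwdef, sq, Complex.mul_re, Complex.sub_re, Complex.ofReal_re]
    try ring
  have hb : 0 < w.im := by rw [hwim]; positivity
  rw [Complex.ext_iff] at hw
  simp [pow_succ, Complex.mul_re, Complex.mul_im] at hw
  obtain ⟨hre', him'⟩ := hw
  set a := w.re with hadef
  set b := w.im with hbdef
  clear_value a b
  have hb2 : b ^ 2 = 3 * a ^ 2 + 1 := by nlinarith [him', hb]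
  have ha : a * (8 * a ^ 2 + 2) = r ^ 2 := by nlinarith [hre', hb2]
  have ha0 : 0 < a := by nlinarith [sq_nonneg a, sq_nonneg r, hr, mul_pos hr hr]
  have ha1 : a ≤ r ^ 2 / 2 := by nlinarith [sq_nonneg a, ha0]
  have hb1 : b - 1 ≤ 3 / 2 * a ^ 2 := by nlinarith [hb, hb2, sq_nonneg a]
  have hbge : 1 ≤ b := by nlinarith [hb2, sq_nonneg a, hb]
  have hare : (l ^ 2 - Complex.I).re = a + r ^ 2 := by
    simp [hwre, sq, Complex.mul_re]
    try ring
  have haim : (l ^ 2 - Complex.I).im = b - 1 := by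
    simp [hwim, sq, Complex.mul_im]
    try ring
  have hμ : ‖l ^ 2 - Complex.I‖ ≤ 2 * r ^ 2 := by
    calc ‖l ^ 2 - Complex.I‖ ≤ |(l ^ 2 - Complex.I).re| + |(l ^ 2 - Complex.I).im| :=
          Complex.norm_le_abs_re_add_abs_im _
      _ ≤ 2 * r ^ 2 := by
          rw [hare, haim, _root_.abs_of_pos (by nlinarith [ha0, pow_pos hr 2]),
            _root_.abs_of_nonneg (by linarith)]
          nlinarith [ha1, hb1, sq_nonneg r]
  set ω : ℂ := Complex.exp (Complex.I * Real.pi / 4) with hωdef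
  clear_value ω
  have hω : ω = (Real.cos (Real.pi / 4) : ℝ) + (Real.sin (Real.pi / 4) : ℝ) * Complex.I := by
    rw [hωdef, show Complex.I * (Real.pi : ℂ) / 4 = ((Real.pi / 4 : ℝ) : ℂ) * Complex.I by
      push_cast; ring, Complex.exp_mul_I, Complex.ofReal_cos, Complex.ofReal_sin]
  have hωre : ω.re = Real.sqrt 2 / 2 := by
    rw [hω]; simp [Real.cos_pi_div_four]
  have hω2 : ω ^ 2 = Complex.I := by
    rw [hωdef, sq, ← Complex.exp_add,
      show Complex.I * (Real.pi : ℂ) / 4 + Complex.I * (Real.pi : ℂ) / 4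
        = ((Real.pi / 2 : ℝ) : ℂ) * Complex.I by push_cast; ring,
      Complex.exp_mul_I]
    simp [Real.cos_pi_div_two, Real.sin_pi_div_two]
  have hprod : (l - ω) * (l + ω) = l ^ 2 - Complex.I := by linear_combination -hω2
  have hfac : ‖l - ω‖ * ‖l + ω‖ = ‖l ^ 2 - Complex.I‖ := by rw [← norm_mul, hprod]
  have hsq : (4:ℝ) / 3 ≤ Real.sqrt 2 := by
    nlinarith [Real.sq_sqrt (show (0:ℝ) ≤ 2 by norm_num), Real.sqrt_nonneg 2]
  have hlow : 2 / 3 ≤ ‖l + ω‖ := by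
    have h1 : (l + ω).re ≤ ‖l + ω‖ := by exact Complex.re_le_norm _
    have h2 : (l + ω).re = l.re + Real.sqrt 2 / 2 := by simp [Complex.add_re, hωre]
    linarith [h1, h2 ▸ h1, hre, hsq]
  have hmul : ‖l - ω‖ * (2/3) ≤ ‖l - ω‖ * ‖l + ω‖ :=
    mul_le_mul_of_nonneg_left hlow (norm_nonneg (l - ω))
  rw [hfac] at hmul
  linarith [hmul, hμ]

/-- Asymptotics as `ξ → 0` of the roots with positive real part of
`-λ² - (λ² - |ξ|²)³ = 0`. -/
theorem roots_asymptotics_low (lam₁ lam₂ lam₃ : EuclideanSpace ℝ (Fin 2) → ℂ)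
    (hroot : ∀ ξ : EuclideanSpace ℝ (Fin 2), ξ ≠ 0 → ∀ i : Fin 3,
      -(![lam₁, lam₂, lam₃] i ξ) ^ 2
        - ((![lam₁, lam₂, lam₃] i ξ) ^ 2 - ((‖ξ‖ : ℂ)) ^ 2) ^ 3 = 0)
    (h₁ : ∀ ξ, ξ ≠ 0 → (lam₁ ξ).im = 0 ∧ 0 < (lam₁ ξ).re)
    (h₂ : ∀ ξ, ξ ≠ 0 → 0 < (lam₂ ξ).re ∧ 0 < (lam₂ ξ).im)
    (h₃ : ∀ ξ, ξ ≠ 0 → lam₃ ξ = starRingEnd ℂ (lam₂ ξ)) :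
    (fun ξ : EuclideanSpace ℝ (Fin 2) => lam₁ ξ - ((‖ξ‖ : ℂ)) ^ 3)
        =O[𝓝[≠] 0] (fun ξ => ‖ξ‖ ^ 5) ∧
    (fun ξ : EuclideanSpace ℝ (Fin 2) => lam₂ ξ - Complex.exp (Complex.I * Real.pi / 4))
        =O[𝓝[≠] 0] (fun ξ => ‖ξ‖ ^ 2) ∧
    (fun ξ : EuclideanSpace ℝ (Fin 2) => lam₃ ξ - Complex.exp (-(Complex.I * Real.pi) / 4))
        =O[𝓝[≠] 0] (fun ξ => ‖ξ‖ ^ 2) := by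
  have hev : ∀ᶠ ξ in 𝓝[≠] (0 : EuclideanSpace ℝ (Fin 2)), ‖ξ‖ ≤ 1 ∧ ξ ≠ 0 := by
    have h1 : ∀ᶠ ξ in 𝓝 (0 : EuclideanSpace ℝ (Fin 2)), ‖ξ‖ ≤ 1 := by
      filter_upwards [Metric.closedBall_mem_nhds (0 : EuclideanSpace ℝ (Fin 2)) one_pos] with ξ hξ
      simpa [Metric.mem_closedBall, dist_zero_right] using hξ
    exact (h1.filter_mono nhdsWithin_le_nhds).and eventually_mem_nhdsWithin
  -- key per-point estimates
  have key2 : ∀ ξ : EuclideanSpace ℝ (Fin 2), ‖ξ‖ ≤ 1 → ξ ≠ 0 →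
      ‖lam₂ ξ - Complex.exp (Complex.I * Real.pi / 4)‖ ≤ 3 * ‖ξ‖ ^ 2 := by
    intro ξ hle hne
    have heq := hroot ξ hne 1
    simp only [Matrix.cons_val_one, Matrix.head_cons, Matrix.cons_val_zero] at heq
    exact complex_root_est (lam₂ ξ) ‖ξ‖ (norm_pos_iff.mpr hne) hle (h₂ ξ hne).1 (h₂ ξ hne).2
      (by linear_combination -heq)
  refine ⟨?_, ?_, ?_⟩
  · rw [isBigO_iff]
    refine ⟨2, ?_⟩
    filter_upwards [hev] with ξ ⟨hle, hne⟩
    have heq := hroot ξ hne 0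
    simp only [Matrix.cons_val_zero] at heq
    obtain ⟨him, hre⟩ := h₁ ξ hne
    set l : ℝ := (lam₁ ξ).re with hldef
    have hl : lam₁ ξ = (l : ℂ) := Complex.ext rfl (by simp [him])
    rw [hl] at heq
    have hcast : ((l ^ 2 - (‖ξ‖ ^ 2 - l ^ 2) ^ 3 : ℝ) : ℂ) = 0 := by
      push_cast
      linear_combination -heq
    have hreq : l ^ 2 = (‖ξ‖ ^ 2 - l ^ 2) ^ 3 := by
      have := Complex.ofReal_eq_zero.mp hcast
      linarith
    have hest := real_root_est l ‖ξ‖ hre (norm_pos_iff.mpr hne) hle hreq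
    have : lam₁ ξ - (‖ξ‖ : ℂ) ^ 3 = ((l - ‖ξ‖ ^ 3 : ℝ) : ℂ) := by rw [hl]; push_cast; ring
    rw [this, Complex.norm_real]
    simp only [Real.norm_eq_abs, _root_.abs_of_nonneg (pow_nonneg (norm_nonneg ξ) 5)]
    exact hest
  · rw [isBigO_iff]
    refine ⟨3, ?_⟩
    filter_upwards [hev] with ξ ⟨hle, hne⟩
    rw [Real.norm_eq_abs, _root_.abs_of_nonneg (by positivity : (0:ℝ) ≤ ‖ξ‖ ^ 2)]
    exact key2 ξ hle hne
  · rw [isBigO_iff]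
    refine ⟨3, ?_⟩
    filter_upwards [hev] with ξ ⟨hle, hne⟩
    rw [Real.norm_eq_abs, _root_.abs_of_nonneg (by positivity : (0:ℝ) ≤ ‖ξ‖ ^ 2)]
    have hconj : Complex.exp (-(Complex.I * Real.pi) / 4)
        = starRingEnd ℂ (Complex.exp (Complex.I * Real.pi / 4)) := by
      rw [← Complex.exp_conj]
      congr 1
      simp [map_div₀, Complex.conj_I, map_ofNat]
      try ring
    rw [h₃ ξ hne, hconj, ← map_sub]
    rw [show ‖(starRingEnd ℂ) (lam₂ ξ - Complex.exp (Complex.I * Real.pi / 4))‖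
      = ‖lam₂ ξ - Complex.exp (Complex.I * Real.pi / 4)‖ from Complex.norm_conj _]
    exact key2 ξ hle hne
end

section
/- As |ξ| → ∞, the roots of -λ² - (λ²-|ξ|²)³ = 0 with positive real part satisfy λ₁(ξ) = |ξ| - (1/2)|ξ|^{-1/3} + O(|ξ|^{-5/3}), λ₂(ξ) = |ξ| - (j²/2)|ξ|^{-1/3} + O(|ξ|^{-5/3}), λ₃(ξ) = |ξ| - (j/2)|ξ|^{-1/3} + O(|ξ|^{-5/3}), where j = e^{2iπ/3}. -/
open Complex Asymptotics Filter Topology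

noncomputable def rtw2 : ℂ := ⟨1/2, Real.sqrt 3 / 2⟩
noncomputable def rtw3 : ℂ := ⟨1/2, -(Real.sqrt 3 / 2)⟩

lemma rt_h3sq : Real.sqrt 3 ^ 2 = 3 := Real.sq_sqrt (by norm_num)

lemma rt_hp : rtw2 + rtw3 = 1 := by simp [Complex.ext_iff, rtw2, rtw3]; norm_num

lemma rt_hq : rtw2 * rtw3 = 1 := by
  simp only [Complex.ext_iff, Complex.mul_re, Complex.mul_im, rtw2, rtw3, Complex.one_re,
    Complex.one_im]
  constructor <;> nlinarith [rt_h3sq]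

lemma rt_fac (u S : ℂ) :
    (u - (-1)*S^2) * (u - rtw2*S^2) * (u - rtw3*S^2) = u^3 + S^6 := by
  linear_combination (-(S^2*u^2) - S^4*u) * rt_hp + (S^4*u + S^6) * rt_hq

lemma rt_normw2 : ‖rtw2‖ = 1 := by
  have h1 : Complex.normSq rtw2 = 1 := by
    simp only [Complex.normSq_apply, rtw2]; nlinarith [rt_h3sq]
  have h2 : ‖rtw2‖^2 = 1 := by rw [Complex.sq_norm, h1]
  have := norm_nonneg rtw2
  nlinarith

lemma rt_normw3 : ‖rtw3‖ = 1 := by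
  have h1 : Complex.normSq rtw3 = 1 := by
    simp only [Complex.normSq_apply, rtw3]; nlinarith [rt_h3sq]
  have h2 : ‖rtw3‖^2 = 1 := by rw [Complex.sq_norm, h1]
  have := norm_nonneg rtw3
  nlinarith

lemma rt_hj : Complex.exp (2 * Real.pi * Complex.I / 3) = -rtw3 := by
  have h1 : (2 * (Real.pi:ℂ) * Complex.I / 3) = ((2*Real.pi/3 : ℝ):ℂ) * Complex.I := by
    push_cast; ring
  rw [h1, Complex.exp_mul_I]
  have hc : Real.cos (2*Real.pi/3) = -(1/2) := by
    rw [show 2*Real.pi/3 = Real.pi - Real.pi/3 by ring, Real.cos_pi_sub, Real.cos_pi_div_three]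
  have hs : Real.sin (2*Real.pi/3) = Real.sqrt 3 / 2 := by
    rw [show 2*Real.pi/3 = Real.pi - Real.pi/3 by ring, Real.sin_pi_sub, Real.sin_pi_div_three]
  rw [← Complex.ofReal_cos, ← Complex.ofReal_sin, hc, hs]
  simp [Complex.ext_iff, rtw3]

lemma rt_hj2 : Complex.exp (2 * Real.pi * Complex.I / 3) ^ 2 = -rtw2 := by
  rw [rt_hj]
  simp only [Complex.ext_iff, pow_two, Complex.mul_re, Complex.mul_im, Complex.neg_re,
    Complex.neg_im, rtw2, rtw3]
  constructor <;> nlinarith [rt_h3sq]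

lemma rt_pick (s : ℝ) (hs : 2 ≤ s) (u a b c : ℂ)
    (hfac : (u - a) * (u - b) * (u - c) = u^3 + ((s:ℂ))^6)
    (h1 : u^3 + u + ((s:ℂ))^6 = 0)
    (hu : ‖u‖ ≤ 2*s^2)
    (hb : Real.sqrt 3 / 2 * s^2 ≤ ‖u - b‖)
    (hc : Real.sqrt 3 / 2 * s^2 ≤ ‖u - c‖) :
    ‖u - a‖ ≤ 3 / s^2 := by
  have hs0 : (0:ℝ) < s := by linarith
  have hprod : ‖u - a‖ * ‖u - b‖ * ‖u - c‖ = ‖u‖ := by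
    rw [← norm_mul, ← norm_mul, hfac,
      show u^3 + ((s:ℂ))^6 = -u from by linear_combination h1, norm_neg]
  have ha0 := norm_nonneg (u - a)
  have hm : (0:ℝ) ≤ Real.sqrt 3 / 2 * s^2 := by positivity
  have e1 : ‖u - a‖ * ((Real.sqrt 3 / 2 * s^2) * (Real.sqrt 3 / 2 * s^2)) ≤ 2*s^2 := by
    calc ‖u - a‖ * ((Real.sqrt 3 / 2 * s^2) * (Real.sqrt 3 / 2 * s^2))
        ≤ ‖u - a‖ * (‖u - b‖ * ‖u - c‖) := by
          apply mul_le_mul_of_nonneg_left _ ha0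
          exact mul_le_mul hb hc hm (norm_nonneg _)
      _ = ‖u - a‖ * ‖u - b‖ * ‖u - c‖ := by ring
      _ = ‖u‖ := hprod
      _ ≤ 2*s^2 := hu
  have e2 : ‖u - a‖ * (3/4 * s^4) ≤ 2*s^2 := by nlinarith [rt_h3sq]
  rw [le_div_iff₀ (by positivity)]
  nlinarith [sq_nonneg s, mul_pos hs0 hs0]

lemma rt_uprops (s : ℝ) (hs : 2 ≤ s) (l : ℂ)
    (heq : -(l^2) - (l^2 - ((s:ℂ))^6)^3 = 0) :
    (l^2-((s:ℂ))^6)^3 + (l^2-((s:ℂ))^6) + ((s:ℂ))^6 = 0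
      ∧ ‖l^2-((s:ℂ))^6‖ ≤ 2*s^2 := by
  have hs0 : (0:ℝ) < s := by linarith
  have hSnorm : ‖((s:ℂ))‖ = s := by simp [abs_of_pos hs0]
  set u : ℂ := l^2 - ((s:ℂ))^6 with hu
  have h1 : u^3 + u + ((s:ℂ))^6 = 0 := by rw [hu]; linear_combination -heq
  refine ⟨h1, ?_⟩
  have hucube : u^3 = -(u + ((s:ℂ))^6) := by linear_combination h1
  have h3 : ‖u‖^3 ≤ ‖u‖ + s^6 := by
    calc ‖u‖^3 = ‖u^3‖ := (norm_pow u 3).symm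
      _ = ‖u + ((s:ℂ))^6‖ := by rw [hucube, norm_neg]
      _ ≤ ‖u‖ + ‖((s:ℂ))^6‖ := norm_add_le _ _
      _ = ‖u‖ + s^6 := by rw [norm_pow, hSnorm]
  by_contra hcon
  push_neg at hcon
  have ha := norm_nonneg u
  have ha2 : ‖u‖^2 > 4*s^4 := by nlinarith [pow_pos hs0 2, pow_pos hs0 4]
  have h46 : 16*s^2 ≤ s^6 := by nlinarith [pow_pos hs0 2, pow_pos hs0 4, sq_nonneg (s^2-4)]
  have hkey : ‖u‖ * (4*s^4) < ‖u‖^3 := by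
    nlinarith [mul_lt_mul_of_pos_left ha2 (show (0:ℝ) < ‖u‖ by nlinarith [pow_pos hs0 2])]
  have hfin : (‖u‖ - 2*s^2) * (4*s^4 - 1) ≥ 0 := by
    apply mul_nonneg (by linarith) (by nlinarith [pow_pos hs0 4])
  nlinarith [pow_pos hs0 4, pow_pos hs0 2]

lemma rt_key (s : ℝ) (hs : 2 ≤ s) (l ω : ℂ) (hω : ‖ω‖ = 1)
    (heq : -(l^2) - (l^2 - ((s:ℂ))^6)^3 = 0)
    (hre : 0 < l.re)
    (hsel : ‖l^2 - ((s:ℂ))^6 - ω * ((s:ℂ))^2‖ ≤ 3 / s^2) :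
    ‖l - ((s:ℂ))^3 - ω/2 * ((s:ℂ))⁻¹‖ ≤ 4 / s^5 := by
  have hs0 : (0:ℝ) < s := by linarith
  have hSnorm : ‖((s:ℂ))‖ = s := by simp [abs_of_pos hs0]
  have hS0 : ((s:ℂ)) ≠ 0 := by simpa using (ne_of_gt hs0)
  set u : ℂ := l^2 - ((s:ℂ))^6 with hu
  obtain ⟨h1, hunorm⟩ := rt_uprops s hs l heq
  have hS3 : ((s:ℂ))^3 = ((s^3 : ℝ):ℂ) := by push_cast; ring
  have hplus_re : s^3 ≤ (l + ((s:ℂ))^3).re := by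
    rw [Complex.add_re, hS3, Complex.ofReal_re]; linarith
  have hplus : s^3 ≤ ‖l + ((s:ℂ))^3‖ := by
    exact hplus_re.trans (Complex.re_le_norm _)
  have hdiff : ‖l - ((s:ℂ))^3‖ ≤ 2 / s := by
    have hid : (l - ((s:ℂ))^3) * (l + ((s:ℂ))^3) = u := by rw [hu]; ring
    have hnm : ‖l - ((s:ℂ))^3‖ * ‖l + ((s:ℂ))^3‖ = ‖u‖ := by rw [← norm_mul, hid]
    rw [le_div_iff₀ hs0]
    nlinarith [norm_nonneg (l - ((s:ℂ))^3), norm_nonneg (l + ((s:ℂ))^3),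
      pow_pos hs0 3, pow_pos hs0 2]
  have hplus0 : l + ((s:ℂ))^3 ≠ 0 := by
    intro h
    rw [h, norm_zero] at hplus
    nlinarith [pow_pos hs0 3]
  have hT : l - ((s:ℂ))^3 - ω/2 * ((s:ℂ))⁻¹
      = (2*((s:ℂ))*(u - ω*((s:ℂ))^2) - ω*(l - ((s:ℂ))^3)) / (2*((s:ℂ))*(l + ((s:ℂ))^3)) := by
    rw [hu]
    field_simp
    ring
  rw [hT, norm_div]
  have hnum : ‖2*((s:ℂ))*(u - ω*((s:ℂ))^2) - ω*(l - ((s:ℂ))^3)‖ ≤ 8/s := by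
    calc ‖2*((s:ℂ))*(u - ω*((s:ℂ))^2) - ω*(l - ((s:ℂ))^3)‖
        ≤ ‖2*((s:ℂ))*(u - ω*((s:ℂ))^2)‖ + ‖ω*(l - ((s:ℂ))^3)‖ := norm_sub_le _ _
      _ = 2*s*‖u - ω*((s:ℂ))^2‖ + ‖l - ((s:ℂ))^3‖ := by
          rw [norm_mul, norm_mul, norm_mul, hSnorm, hω]; norm_num
      _ ≤ 2*s*(3/s^2) + 2/s := by
          have := mul_le_mul_of_nonneg_left hsel (by positivity : (0:ℝ) ≤ 2*s)
          linarith [hdiff]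
      _ = 8/s := by field_simp; ring
  have hden : 2 * s^4 ≤ ‖2*((s:ℂ))*(l + ((s:ℂ))^3)‖ := by
    rw [norm_mul, norm_mul, hSnorm]
    have h2 : ‖(2:ℂ)‖ = 2 := by norm_num
    rw [h2]
    nlinarith [pow_pos hs0 3]
  calc ‖2*((s:ℂ))*(u - ω*((s:ℂ))^2) - ω*(l - ((s:ℂ))^3)‖ / ‖2*((s:ℂ))*(l + ((s:ℂ))^3)‖
      ≤ (8/s) / (2*s^4) := by
        apply div_le_div₀ (by positivity) hnum (by positivity) hden
    _ = 4 / s^5 := by field_simp; ring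

lemma rt_im_mul_S2 (w : ℂ) (s : ℝ) : (w * ((s:ℂ))^2).im = w.im * s^2 := by
  have h2 : ((s:ℂ))^2 = ((s^2:ℝ):ℂ) := by norm_cast
  rw [h2, Complex.mul_im, Complex.ofReal_re, Complex.ofReal_im]
  ring

lemma rt_norm_ge_im (z : ℂ) : |z.im| ≤ ‖z‖ := by
  exact Complex.abs_im_le_norm z

lemma rt_sel_real (s : ℝ) (hs : 2 ≤ s) (u : ℂ)
    (h1 : u^3 + u + ((s:ℂ))^6 = 0) (hu : ‖u‖ ≤ 2*s^2) (him : u.im = 0) :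
    ‖u - (-1) * ((s:ℂ))^2‖ ≤ 3 / s^2 := by
  have hs0 : (0:ℝ) < s := by linarith
  have hsq3 : (0:ℝ) ≤ Real.sqrt 3 := Real.sqrt_nonneg 3
  apply rt_pick s hs u _ (rtw2 * ((s:ℂ))^2) (rtw3 * ((s:ℂ))^2) (rt_fac u _) h1 hu
  · have him2 : (u - rtw2*((s:ℂ))^2).im = -(Real.sqrt 3/2 * s^2) := by
      rw [Complex.sub_im, rt_im_mul_S2, him, show rtw2.im = Real.sqrt 3/2 from rfl]; ring
    calc Real.sqrt 3 / 2 * s^2 = |(u - rtw2*((s:ℂ))^2).im| := by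
          rw [him2, abs_neg, _root_.abs_of_nonneg (by positivity)]
      _ ≤ ‖u - rtw2*((s:ℂ))^2‖ := rt_norm_ge_im _
  · have him2 : (u - rtw3*((s:ℂ))^2).im = Real.sqrt 3/2 * s^2 := by
      rw [Complex.sub_im, rt_im_mul_S2, him, show rtw3.im = -(Real.sqrt 3/2) from rfl]; ring
    calc Real.sqrt 3 / 2 * s^2 = |(u - rtw3*((s:ℂ))^2).im| := by
          rw [him2, _root_.abs_of_nonneg (by positivity)]
      _ ≤ ‖u - rtw3*((s:ℂ))^2‖ := rt_norm_ge_im _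

lemma rt_im_eq (s : ℝ) (u : ℂ) (h1 : u^3 + u + ((s:ℂ))^6 = 0) :
    u.im * (3*u.re^2 - u.im^2 + 1) = 0 := by
  have h6 : ((s:ℂ))^6 = ((s^6:ℝ):ℂ) := by norm_cast
  rw [h6] at h1
  have himh := congrArg Complex.im h1
  simp only [Complex.add_im, Complex.mul_im, Complex.mul_re, pow_succ, pow_zero,
    Complex.one_re, Complex.one_im, Complex.ofReal_im, Complex.zero_im] at himh
  linear_combination himh

lemma rt_norm_plus (s : ℝ) (hs : 2 ≤ s) (u : ℂ)
    (h1 : u^3 + u + ((s:ℂ))^6 = 0) (him : u.im ≠ 0) :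
    Real.sqrt 3 / 2 * s^2 ≤ ‖u - (-1)*((s:ℂ))^2‖ := by
  have hs0 : (0:ℝ) < s := by linarith
  have hy2 : u.im^2 = 3*u.re^2 + 1 := by
    rcases mul_eq_zero.1 (rt_im_eq s u h1) with h | h
    · exact absurd h him
    · linarith
  have hre2 : (u - (-1)*((s:ℂ))^2).re = u.re + s^2 := by
    simp [Complex.sub_re, Complex.mul_re, ← Complex.ofReal_pow]
  have him2 : (u - (-1)*((s:ℂ))^2).im = u.im := by
    simp [Complex.sub_im, Complex.mul_im, ← Complex.ofReal_pow]
  have hsq : (Real.sqrt 3 / 2 * s^2)^2 ≤ ‖u - (-1)*((s:ℂ))^2‖^2 := by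
    rw [Complex.sq_norm, Complex.normSq_apply, hre2, him2]
    nlinarith [rt_h3sq, sq_nonneg (2*u.re + s^2/2)]
  nlinarith [norm_nonneg (u - (-1)*((s:ℂ))^2), Real.sqrt_nonneg 3, pow_pos hs0 2,
    mul_nonneg (mul_nonneg (Real.sqrt_nonneg 3) (by norm_num : (0:ℝ) ≤ 1/2)) (sq_nonneg s)]

lemma rt_sel_pos (s : ℝ) (hs : 2 ≤ s) (u : ℂ)
    (h1 : u^3 + u + ((s:ℂ))^6 = 0) (hu : ‖u‖ ≤ 2*s^2) (him : 0 < u.im) :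
    ‖u - rtw2 * ((s:ℂ))^2‖ ≤ 3 / s^2 := by
  have hs0 : (0:ℝ) < s := by linarith
  apply rt_pick s hs u _ ((-1)*((s:ℂ))^2) (rtw3 * ((s:ℂ))^2)
    (by rw [← rt_fac u ((s:ℂ))]; ring) h1 hu
  · exact rt_norm_plus s hs u h1 (ne_of_gt him)
  · have him2 : (u - rtw3*((s:ℂ))^2).im = u.im + Real.sqrt 3/2 * s^2 := by
      rw [Complex.sub_im, rt_im_mul_S2, show rtw3.im = -(Real.sqrt 3/2) from rfl]; ring
    calc Real.sqrt 3 / 2 * s^2 ≤ |(u - rtw3*((s:ℂ))^2).im| := by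
          rw [him2, _root_.abs_of_nonneg (by positivity)]; linarith
      _ ≤ ‖u - rtw3*((s:ℂ))^2‖ := rt_norm_ge_im _

lemma rt_sel_neg (s : ℝ) (hs : 2 ≤ s) (u : ℂ)
    (h1 : u^3 + u + ((s:ℂ))^6 = 0) (hu : ‖u‖ ≤ 2*s^2) (him : u.im < 0) :
    ‖u - rtw3 * ((s:ℂ))^2‖ ≤ 3 / s^2 := by
  have hs0 : (0:ℝ) < s := by linarith
  apply rt_pick s hs u _ ((-1)*((s:ℂ))^2) (rtw2 * ((s:ℂ))^2)
    (by rw [← rt_fac u ((s:ℂ))]; ring) h1 hu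
  · exact rt_norm_plus s hs u h1 (ne_of_lt him)
  · have him2 : (u - rtw2*((s:ℂ))^2).im = u.im - Real.sqrt 3/2 * s^2 := by
      rw [Complex.sub_im, rt_im_mul_S2, show rtw2.im = Real.sqrt 3/2 from rfl]
    calc Real.sqrt 3 / 2 * s^2 ≤ |(u - rtw2*((s:ℂ))^2).im| := by
          rw [him2, abs_sub_comm,
            _root_.abs_of_nonneg (by nlinarith [Real.sqrt_nonneg 3, pow_pos hs0 2])]
          nlinarith [Real.sqrt_nonneg 3, pow_pos hs0 2]
      _ ≤ ‖u - rtw2*((s:ℂ))^2‖ := rt_norm_ge_im _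

lemma rt_case (s : ℝ) (hs : 2 ≤ s) (l ω : ℂ) (hω : ‖ω‖ = 1)
    (heq : -(l^2) - (l^2 - ((s:ℂ))^6)^3 = 0) (hre : 0 < l.re)
    (hsel : ‖(l^2 - ((s:ℂ))^6) - ω * ((s:ℂ))^2‖ ≤ 3 / s^2) :
    ‖l - ((s:ℂ))^3 - ω/2 * ((s:ℂ))⁻¹‖ ≤ 4 / s^5 :=
  rt_key s hs l ω hω heq hre hsel

lemma rt_im_sq (l : ℂ) (s : ℝ) : (l^2 - ((s:ℂ))^6).im = 2 * l.re * l.im := by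
  simp [Complex.sub_im, pow_two, Complex.mul_im, ← Complex.ofReal_pow,
    show ((s:ℂ))^6 = ((s^6:ℝ):ℂ) from by norm_cast]
  ring

/-- Asymptotics as `|ξ| → ∞` of the roots with positive real part of
`-λ² - (λ² - |ξ|²)³ = 0`, where `j = e^{2iπ/3}`. -/
theorem roots_asymptotics_high (lam₁ lam₂ lam₃ : EuclideanSpace ℝ (Fin 2) → ℂ)
    (hroot : ∀ ξ : EuclideanSpace ℝ (Fin 2), ξ ≠ 0 → ∀ i : Fin 3,
      -(![lam₁, lam₂, lam₃] i ξ) ^ 2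
        - ((![lam₁, lam₂, lam₃] i ξ) ^ 2 - ((‖ξ‖ : ℂ)) ^ 2) ^ 3 = 0)
    (h₁ : ∀ ξ, ξ ≠ 0 → (lam₁ ξ).im = 0 ∧ 0 < (lam₁ ξ).re)
    (h₂ : ∀ ξ, ξ ≠ 0 → 0 < (lam₂ ξ).re ∧ 0 < (lam₂ ξ).im)
    (h₃ : ∀ ξ, ξ ≠ 0 → lam₃ ξ = starRingEnd ℂ (lam₂ ξ)) :
    letI j : ℂ := Complex.exp (2 * Real.pi * Complex.I / 3)
    letI F : Filter (EuclideanSpace ℝ (Fin 2)) :=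
      Filter.comap (fun ξ => ‖ξ‖) Filter.atTop
    ((fun ξ : EuclideanSpace ℝ (Fin 2) =>
        lam₁ ξ - (‖ξ‖ : ℂ) + (1/2 : ℂ) * ((‖ξ‖ ^ (-(1:ℝ)/3) : ℝ) : ℂ))
        =O[F] (fun ξ => ‖ξ‖ ^ (-(5:ℝ)/3))) ∧
    ((fun ξ : EuclideanSpace ℝ (Fin 2) =>
        lam₂ ξ - (‖ξ‖ : ℂ) + (j ^ 2 / 2) * ((‖ξ‖ ^ (-(1:ℝ)/3) : ℝ) : ℂ))
        =O[F] (fun ξ => ‖ξ‖ ^ (-(5:ℝ)/3))) ∧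
    ((fun ξ : EuclideanSpace ℝ (Fin 2) =>
        lam₃ ξ - (‖ξ‖ : ℂ) + (j / 2) * ((‖ξ‖ ^ (-(1:ℝ)/3) : ℝ) : ℂ))
        =O[F] (fun ξ => ‖ξ‖ ^ (-(5:ℝ)/3))) := by
  have hev : ∀ᶠ ξ in (Filter.comap (fun ξ : EuclideanSpace ℝ (Fin 2) => ‖ξ‖) Filter.atTop),
      8 ≤ ‖ξ‖ := tendsto_comap.eventually (eventually_ge_atTop 8)
  have H : ∀ (lam : EuclideanSpace ℝ (Fin 2) → ℂ) (ω c : ℂ), ‖ω‖ = 1 → c = -(ω/2) →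
      (∀ ξ : EuclideanSpace ℝ (Fin 2), ξ ≠ 0 →
        -(lam ξ)^2 - ((lam ξ)^2 - ((‖ξ‖:ℂ))^2)^3 = 0) →
      (∀ ξ : EuclideanSpace ℝ (Fin 2), ξ ≠ 0 → 0 < (lam ξ).re) →
      (∀ (ξ : EuclideanSpace ℝ (Fin 2)) (s : ℝ), 2 ≤ s → s^3 = ‖ξ‖ → ξ ≠ 0 →
        ‖((lam ξ)^2 - ((s:ℂ))^6) - ω*((s:ℂ))^2‖ ≤ 3/s^2) →
      ((fun ξ : EuclideanSpace ℝ (Fin 2) =>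
          lam ξ - (‖ξ‖ : ℂ) + c * ((‖ξ‖ ^ (-(1:ℝ)/3) : ℝ) : ℂ))
        =O[Filter.comap (fun ξ : EuclideanSpace ℝ (Fin 2) => ‖ξ‖) Filter.atTop]
          (fun ξ => ‖ξ‖ ^ (-(5:ℝ)/3))) := by
    intro lam ω c hω hc hroots hres hsels
    rw [isBigO_iff]
    refine ⟨4, ?_⟩
    filter_upwards [hev] with ξ hξ
    have hξ0 : ξ ≠ 0 := by
      intro h; rw [h, norm_zero] at hξ; norm_num at hξ
    have hr0 : (0:ℝ) ≤ ‖ξ‖ := norm_nonneg ξ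
    set s : ℝ := ‖ξ‖ ^ ((1:ℝ)/3) with hsdef
    have h8 : (8:ℝ) ^ ((1:ℝ)/3) = 2 := by
      rw [show (8:ℝ) = (2:ℝ)^(3:ℕ) by norm_num, ← Real.rpow_natCast 2 3,
        ← Real.rpow_mul (by norm_num)]
      norm_num
    have hs : 2 ≤ s := by
      rw [hsdef, ← h8]; exact Real.rpow_le_rpow (by norm_num) hξ (by norm_num)
    have hs0 : (0:ℝ) < s := by linarith
    have hs3 : s^3 = ‖ξ‖ := by
      rw [hsdef, ← Real.rpow_natCast (‖ξ‖ ^ ((1:ℝ)/3)) 3, ← Real.rpow_mul hr0]; norm_num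
    have hinv : ‖ξ‖ ^ (-(1:ℝ)/3) = s⁻¹ := by
      rw [show -(1:ℝ)/3 = -((1:ℝ)/3) by norm_num, Real.rpow_neg hr0, hsdef]
    have h53 : ‖ξ‖ ^ (-(5:ℝ)/3) = (s^5)⁻¹ := by
      rw [show -(5:ℝ)/3 = ((1:ℝ)/3) * (-(5:ℕ) : ℝ) by norm_num, Real.rpow_mul hr0,
        Real.rpow_neg (Real.rpow_nonneg hr0 _), Real.rpow_natCast, hsdef]
    have hcast : ((‖ξ‖:ℝ):ℂ) = ((s:ℂ))^3 := by
      rw [← hs3]; push_cast; ring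
    have hc6 : ((‖ξ‖:ℂ))^2 = ((s:ℂ))^6 := by rw [hcast]; ring
    have heq : -(lam ξ)^2 - ((lam ξ)^2 - ((s:ℂ))^6)^3 = 0 := by
      rw [← hc6]; exact hroots ξ hξ0
    have hkey := rt_key s hs (lam ξ) ω hω heq (hres ξ hξ0) (hsels ξ s hs hs3 hξ0)
    have hLHS : lam ξ - ((‖ξ‖:ℝ):ℂ) + c * ((‖ξ‖ ^ (-(1:ℝ)/3) : ℝ) : ℂ)
        = lam ξ - ((s:ℂ))^3 - ω/2 * ((s:ℂ))⁻¹ := by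
      rw [hinv, Complex.ofReal_inv, hcast, hc]; ring
    have hRHS : 4 * ‖‖ξ‖ ^ (-(5:ℝ)/3)‖ = 4 / s^5 := by
      rw [Real.norm_eq_abs, h53, _root_.abs_of_nonneg (by positivity), div_eq_mul_inv]
    rw [hLHS, hRHS]
    exact hkey
  -- selection facts per component
  have sel1 : ∀ (ξ : EuclideanSpace ℝ (Fin 2)) (s : ℝ), 2 ≤ s → s^3 = ‖ξ‖ → ξ ≠ 0 →
      ‖((lam₁ ξ)^2 - ((s:ℂ))^6) - (-1)*((s:ℂ))^2‖ ≤ 3/s^2 := by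
    intro ξ s hs hs3 hξ0
    have hcast : ((‖ξ‖:ℝ):ℂ) = ((s:ℂ))^3 := by rw [← hs3]; push_cast; ring
    have hc6 : ((‖ξ‖:ℂ))^2 = ((s:ℂ))^6 := by rw [hcast]; ring
    have heq : -(lam₁ ξ)^2 - ((lam₁ ξ)^2 - ((s:ℂ))^6)^3 = 0 := by
      rw [← hc6]; simpa using hroot ξ hξ0 0
    obtain ⟨h1, hu⟩ := rt_uprops s hs (lam₁ ξ) heq
    have him : ((lam₁ ξ)^2 - ((s:ℂ))^6).im = 0 := by
      rw [rt_im_sq, (h₁ ξ hξ0).1]; ring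
    exact rt_sel_real s hs _ h1 hu him
  have sel2 : ∀ (ξ : EuclideanSpace ℝ (Fin 2)) (s : ℝ), 2 ≤ s → s^3 = ‖ξ‖ → ξ ≠ 0 →
      ‖((lam₂ ξ)^2 - ((s:ℂ))^6) - rtw2*((s:ℂ))^2‖ ≤ 3/s^2 := by
    intro ξ s hs hs3 hξ0
    have hcast : ((‖ξ‖:ℝ):ℂ) = ((s:ℂ))^3 := by rw [← hs3]; push_cast; ring
    have hc6 : ((‖ξ‖:ℂ))^2 = ((s:ℂ))^6 := by rw [hcast]; ring
    have heq : -(lam₂ ξ)^2 - ((lam₂ ξ)^2 - ((s:ℂ))^6)^3 = 0 := by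
      rw [← hc6]; simpa using hroot ξ hξ0 1
    obtain ⟨h1, hu⟩ := rt_uprops s hs (lam₂ ξ) heq
    have him : 0 < ((lam₂ ξ)^2 - ((s:ℂ))^6).im := by
      rw [rt_im_sq]
      have h2 := h₂ ξ hξ0
      exact mul_pos (mul_pos two_pos h2.1) h2.2
    exact rt_sel_pos s hs _ h1 hu him
  have sel3 : ∀ (ξ : EuclideanSpace ℝ (Fin 2)) (s : ℝ), 2 ≤ s → s^3 = ‖ξ‖ → ξ ≠ 0 →
      ‖((lam₃ ξ)^2 - ((s:ℂ))^6) - rtw3*((s:ℂ))^2‖ ≤ 3/s^2 := by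
    intro ξ s hs hs3 hξ0
    have hcast : ((‖ξ‖:ℝ):ℂ) = ((s:ℂ))^3 := by rw [← hs3]; push_cast; ring
    have hc6 : ((‖ξ‖:ℂ))^2 = ((s:ℂ))^6 := by rw [hcast]; ring
    have heq : -(lam₃ ξ)^2 - ((lam₃ ξ)^2 - ((s:ℂ))^6)^3 = 0 := by
      rw [← hc6]; simpa using hroot ξ hξ0 2
    obtain ⟨h1, hu⟩ := rt_uprops s hs (lam₃ ξ) heq
    have him : ((lam₃ ξ)^2 - ((s:ℂ))^6).im < 0 := by
      rw [rt_im_sq, h₃ ξ hξ0, Complex.conj_re, Complex.conj_im]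
      have h2 := h₂ ξ hξ0
      have : 0 < 2 * (lam₂ ξ).re * (lam₂ ξ).im :=
        mul_pos (mul_pos two_pos h2.1) h2.2
      linarith
    exact rt_sel_neg s hs _ h1 hu him
  have hre3 : ∀ ξ : EuclideanSpace ℝ (Fin 2), ξ ≠ 0 → 0 < (lam₃ ξ).re := by
    intro ξ hξ0
    rw [h₃ ξ hξ0, Complex.conj_re]
    exact (h₂ ξ hξ0).1
  refine ⟨?_, ?_, ?_⟩
  · exact H lam₁ (-1) (1/2) (by norm_num) (by norm_num)
      (fun ξ h => by simpa using hroot ξ h 0) (fun ξ h => (h₁ ξ h).2) sel1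
  · exact H lam₂ rtw2 _ rt_normw2 (by rw [rt_hj2]; ring)
      (fun ξ h => by simpa using hroot ξ h 1) (fun ξ h => (h₂ ξ h).1) sel2
  · exact H lam₃ rtw3 _ rt_normw3 (by rw [rt_hj]; ring)
      (fun ξ h => by simpa using hroot ξ h 2) hre3 sel3
end

section
/- Let E: ℕ → [0,∞) be nondecreasing and suppose there exist constants C > 0 and A ≥ 0 such that for all k ≥ 1, E(k) ≤ C((E(k+1)-E(k))^{3/2} + (E(k+1)-E(k)) + A²(k+1)²), and suppose additionally E(n) ≤ C₀ n for all n. Then there exists a constant C' (depending only on C, C₀) such that E(k) ≤ C' A² k² for all k ≥ 1, provided A ≤ 1. -/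
open Real

lemma sv_pow32_le_add (x : ℝ) (hx : 0 ≤ x) : x ^ ((3:ℝ)/2) ≤ x + x^2 := by
  rcases le_or_gt x 1 with h | h
  · rcases eq_or_lt_of_le hx with h0 | h0
    · rw [← h0, Real.zero_rpow (by norm_num)]; norm_num
    · have h1 := Real.rpow_le_rpow_of_exponent_ge h0 h (by norm_num : (1:ℝ) ≤ (3:ℝ)/2)
      rw [Real.rpow_one] at h1
      nlinarith [sq_nonneg x]
  · have h1 := Real.rpow_le_rpow_of_exponent_le h.le (by norm_num : (3:ℝ)/2 ≤ ((2:ℕ):ℝ))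
    rw [Real.rpow_natCast] at h1
    nlinarith

lemma sv_sq_pow32 (x : ℝ) (hx : 0 ≤ x) : (x ^ ((3:ℝ)/2)) ^ 2 = x ^ 3 := by
  rw [← Real.rpow_natCast (x ^ ((3:ℝ)/2)) 2, ← Real.rpow_mul hx, ← Real.rpow_natCast x 3]
  norm_num

set_option maxHeartbeats 1600000 in
/-- The backwards-induction (Saint-Venant) lemma for truncated energies. -/
theorem saint_venant_induction (C C₀ : ℝ) (hC : 0 < C) (hC₀ : 0 ≤ C₀) :
    ∃ C' : ℝ, 0 < C' ∧
      ∀ (E : ℕ → ℝ) (A : ℝ),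
        (∀ k, 0 ≤ E k) → Monotone E → 0 ≤ A → A ≤ 1 →
        (∀ k : ℕ, 1 ≤ k →
          E k ≤ C * ((E (k+1) - E k) ^ ((3:ℝ)/2) + (E (k+1) - E k) + A ^ 2 * (k+1) ^ 2)) →
        (∀ n : ℕ, E n ≤ C₀ * n) →
        ∀ k : ℕ, 1 ≤ k → E k ≤ C' * A ^ 2 * k ^ 2 := by
  obtain ⟨N, hNge⟩ := exists_nat_ge (3456*C^3 + 12*C + 15)
  refine ⟨32*C*((N:ℝ)+1)^2, by positivity, ?_⟩
  intro E A hE0 hmono hA0 hA1 hrec hlin k hk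
  by_contra hbad
  push_neg at hbad
  set k₀ : ℕ := max k (N+1) with hk₀def
  have hkk₀ : k ≤ k₀ := le_max_left _ _
  have hNk₀ : N+1 ≤ k₀ := le_max_right _ _
  have h1k₀ : 1 ≤ k₀ := le_trans hk hkk₀
  have hk₀mul : k₀ ≤ k*(N+1) :=
    max_le (Nat.le_mul_of_pos_right _ (Nat.succ_pos N)) (Nat.le_mul_of_pos_left _ hk)
  -- the "bad" point, pushed beyond N
  have he₀ : 32*C*A^2*(k₀:ℝ)^2 < E k₀ := by
    have h1 : (k₀:ℝ) ≤ (k:ℝ)*((N:ℝ)+1) := by exact_mod_cast hk₀mul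
    have h2 : (k₀:ℝ)^2 ≤ ((k:ℝ)*((N:ℝ)+1))^2 := pow_le_pow_left₀ (Nat.cast_nonneg _) h1 2
    have h3 : E k ≤ E k₀ := hmono hkk₀
    have h4 : 32*C*A^2*(k₀:ℝ)^2 ≤ 32*C*A^2*((k:ℝ)*((N:ℝ)+1))^2 := by
      have := mul_le_mul_of_nonneg_left h2 (by positivity : (0:ℝ) ≤ 32*C*A^2)
      linarith
    have h5 : 32*C*A^2*((k:ℝ)*((N:ℝ)+1))^2 = 32*C*((N:ℝ)+1)^2*A^2*(k:ℝ)^2 := by ring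
    rw [h5] at h4
    linarith
  have hdelta0 : ∀ m : ℕ, 0 ≤ E (m+1) - E m := fun m => sub_nonneg.mpr (hmono (Nat.le_succ m))
  -- hiding the source term
  have hide : ∀ m : ℕ, 1 ≤ m → 8*C*A^2*((m:ℝ)+1)^2 ≤ E m →
      E m ≤ 2*C*((E (m+1) - E m) ^ ((3:ℝ)/2) + (E (m+1) - E m)) := by
    intro m h1m hQm
    have h := hrec m h1m
    have hx : 0 ≤ (E (m+1) - E m) ^ ((3:ℝ)/2) := Real.rpow_nonneg (hdelta0 m) _
    nlinarith [mul_nonneg hC.le hx, mul_nonneg hC.le (hdelta0 m)]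
  -- quadratic invariant propagates forward
  have hQ : ∀ m, k₀ ≤ m → 8*C*A^2*((m:ℝ)+1)^2 ≤ E m := by
    intro m hm
    induction m, hm using Nat.le_induction with
    | base =>
      have h1 : (1:ℝ) ≤ (k₀:ℝ) := by exact_mod_cast h1k₀
      have hq : (0:ℝ) ≤ 4*(k₀:ℝ)^2 - ((k₀:ℝ)+1)^2 := by nlinarith
      nlinarith [he₀, mul_nonneg (mul_nonneg (mul_nonneg (by norm_num : (0:ℝ) ≤ 8) hC.le)
        (sq_nonneg A)) hq]
    | succ m hm ih =>
      have h1m : 1 ≤ m := le_trans h1k₀ hm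
      have hmR : 3456*C^3 + 12*C + 16 ≤ (m:ℝ) := by
        have h' : ((N:ℕ):ℝ)+1 ≤ (m:ℝ) := by exact_mod_cast le_trans hNk₀ hm
        linarith
      have hδ0 : 0 ≤ E (m+1) - E m := hdelta0 m
      have hEδ := hide m h1m ih
      have hc3 : (0:ℝ) ≤ C^3 := by positivity
      have hkey : 8*C*A^2*(2*(m:ℝ)+3) ≤ E (m+1) - E m := by
        by_contra hsmall
        push_neg at hsmall
        rcases eq_or_lt_of_le hA0 with hA | hApos
        · rw [← hA] at hsmall; norm_num at hsmall; linarith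
        have hA2 : (0:ℝ) < A^2 := by positivity
        have hx0 : 0 ≤ (E (m+1) - E m) ^ ((3:ℝ)/2) := Real.rpow_nonneg hδ0 _
        have hCm : 12*C ≤ (m:ℝ)+1 := by linarith
        have hq : 4*C*(2*(m:ℝ)+3) ≤ ((m:ℝ)+1)^2 := by
          nlinarith [mul_nonneg (sub_nonneg.mpr hCm) (by linarith : (0:ℝ) ≤ (m:ℝ)+1-15), hC.le]
        have h2C : (0:ℝ) < 2*C := by linarith
        have h1 : 2*A^2*((m:ℝ)+1)^2 ≤ (E (m+1) - E m) ^ ((3:ℝ)/2) := by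
          rw [← mul_le_mul_iff_right₀ h2C]
          have hq4 := mul_le_mul_of_nonneg_left hq (by positivity : (0:ℝ) ≤ 4*C*A^2)
          have hmul := mul_lt_mul_of_pos_left hsmall h2C
          nlinarith [hEδ, ih]
        have h2 : 4*A^4*((m:ℝ)+1)^4 ≤ (E (m+1) - E m)^3 := by
          have h1' := pow_le_pow_left₀ (by positivity : (0:ℝ) ≤ 2*A^2*((m:ℝ)+1)^2) h1 2
          rw [sv_sq_pow32 _ hδ0] at h1'
          linarith [h1']
        have hb : E (m+1) - E m < 24*C*A^2*((m:ℝ)+1) := by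
          have h' : (0:ℝ) ≤ C*A^2*(m:ℝ) :=
            mul_nonneg (mul_nonneg hC.le hA2.le) (Nat.cast_nonneg _)
          linarith
        have h3 : (E (m+1) - E m)^3 < (24*C*A^2*((m:ℝ)+1))^3 :=
          pow_lt_pow_left₀ hb hδ0 (by norm_num)
        have hA6 : A^6 ≤ A^4 := pow_le_pow_of_le_one hA0 hA1 (by norm_num)
        have hX : (0:ℝ) < A^4*((m:ℝ)+1)^3 := by positivity
        have hfin : 4*((m:ℝ)+1) < 13824*C^3 := by
          have hc1 : 13824*C^3*A^6*((m:ℝ)+1)^3 ≤ 13824*C^3*A^4*((m:ℝ)+1)^3 := by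
            have h' := mul_le_mul_of_nonneg_left hA6
              (by positivity : (0:ℝ) ≤ 13824*C^3*((m:ℝ)+1)^3)
            linarith [h']
          have hc2 : (4*((m:ℝ)+1)) * (A^4*((m:ℝ)+1)^3) < (13824*C^3) * (A^4*((m:ℝ)+1)^3) := by
            linarith [h2, h3, hc1]
          exact lt_of_mul_lt_mul_right hc2 hX.le
        linarith
      push_cast
      linarith [ih, hkey]
  -- phase 2: linear growth with positive slope, then superlinear contradiction
  have he₀pos : 0 < E k₀ := lt_of_le_of_lt (by positivity) he₀
  set d : ℝ := min 1 (E k₀ / (8*C)) with hd_def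
  have hdpos : 0 < d := lt_min one_pos (div_pos he₀pos (by linarith))
  have hbound : ∀ m, k₀ ≤ m → E m ≤ 4*C*((E (m+1) - E m) + (E (m+1) - E m)^2) := by
    intro m hm
    have h1m : 1 ≤ m := le_trans h1k₀ hm
    have hEδ := hide m h1m (hQ m hm)
    have h32 := sv_pow32_le_add _ (hdelta0 m)
    have h32' := mul_le_mul_of_nonneg_left h32 (by linarith : (0:ℝ) ≤ 2*C)
    nlinarith [hdelta0 m, mul_nonneg hC.le (sq_nonneg (E (m+1) - E m))]
  have hslope : ∀ m, k₀ ≤ m → d ≤ E (m+1) - E m := by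
    intro m hm
    have hb := hbound m hm
    have hδ0 := hdelta0 m
    have hmono' : E k₀ ≤ E m := hmono hm
    rcases le_or_gt 1 (E (m+1) - E m) with h | h
    · exact le_trans (min_le_left _ _) h
    · refine le_trans (min_le_right _ _) ?_
      rw [div_le_iff₀ (by linarith : (0:ℝ) < 8*C)]
      nlinarith [mul_nonneg (mul_nonneg hC.le hδ0) (by linarith : (0:ℝ) ≤ 1 - (E (m+1) - E m))]
  have hgrow : ∀ j : ℕ, E k₀ + d*(j:ℝ) ≤ E (k₀ + j) := by
    intro j
    induction j with
    | zero => simp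
    | succ j ih =>
      have hs := hslope (k₀+j) (Nat.le_add_right _ _)
      have he : k₀ + (j+1) = (k₀ + j) + 1 := by omega
      rw [he]
      push_cast
      linarith
  set Estar : ℝ := 4*C*((2*C₀+1) + (2*C₀+1)^2) with hEstar
  have hEstarpos : 0 ≤ Estar := by nlinarith [sq_nonneg (2*C₀+1)]
  obtain ⟨j₁, h2⟩ := exists_nat_ge (Estar / d)
  set m₁ : ℕ := k₀ + j₁ with hm₁def
  have hk₀m₁ : k₀ ≤ m₁ := Nat.le_add_right _ _
  have hm₁E : Estar ≤ E m₁ := by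
    have h1 := hgrow j₁
    have h3 : Estar ≤ d * (j₁:ℝ) := by
      rw [div_le_iff₀ hdpos] at h2; linarith
    linarith [hE0 k₀]
  have hfast : ∀ m, m₁ ≤ m → 2*C₀+1 ≤ E (m+1) - E m := by
    intro m hm
    have hb := hbound m (le_trans hk₀m₁ hm)
    have hδ0 := hdelta0 m
    have hmE : Estar ≤ E m := le_trans hm₁E (hmono hm)
    by_contra hlt
    push_neg at hlt
    have hstep : (E (m+1) - E m) + (E (m+1) - E m)^2 < (2*C₀+1) + (2*C₀+1)^2 := by
      nlinarith
    have := mul_lt_mul_of_pos_left hstep (by linarith : (0:ℝ) < 4*C)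
    linarith
  have hgrow2 : ∀ j : ℕ, Estar + (2*C₀+1)*(j:ℝ) ≤ E (m₁ + j) := by
    intro j
    induction j with
    | zero => simp [hm₁E]
    | succ j ih =>
      have hs := hfast (m₁+j) (Nat.le_add_right _ _)
      have he : m₁ + (j+1) = (m₁ + j) + 1 := by omega
      rw [he]
      push_cast
      linarith
  obtain ⟨j₂', hj₂'⟩ := exists_nat_ge (C₀ * (m₁:ℝ))
  set j₂ : ℕ := j₂' + 1 with hj₂
  have h1 := hgrow2 j₂
  have h2 := hlin (m₁ + j₂)
  have h3 : C₀*(m₁:ℝ) + 1 ≤ (j₂:ℝ) := by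
    rw [hj₂]
    push_cast
    linarith
  have h4 : (0:ℝ) ≤ (j₂:ℝ) := Nat.cast_nonneg _
  have hcast : (j₂:ℝ) = (j₂':ℝ) + 1 := by rw [hj₂]; push_cast; ring
  push_cast at h2
  nlinarith [mul_nonneg hC₀ h4, h1, h2, h3, hEstarpos, hcast]
end
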